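/- arXiv:2002.05125 — 4 statements merged into one kernel-verified Lean document; each statement's English description precedes it below -/
import Mathlib

section
/- There exists a sequence of real numbers (c_n) such that for every natural number q, the series ∑_{j=0}^∞ c_j·(-2^j)^q converges to 1, and for every natural number q, the series ∑_{j=0}^∞ |c_j|·(2^j)^q converges (is finite). -/
open Finset Filter Topology Polynomial

noncomputable def sG (k j : ℕ) : ℝ := (1 + (2:ℝ)^j) / ((2:ℝ)^j - (2:ℝ)^k)

noncomputable def sL (n k : ℕ) : ℝ := ∏ j ∈ (Finset.range (n+1)).erase k, sG k j

lemma two_pow_lt {a b : ℕ} (h : a < b) : (2:ℝ)^a < 2^b :=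
  pow_lt_pow_right₀ (by norm_num) h

lemma sG_ge_one {k j : ℕ} (h : k < j) : 1 ≤ sG k j := by
  have h1 : (0:ℝ) < 2^j - 2^k := by linarith [two_pow_lt h]
  rw [sG, le_div_iff₀ h1]
  have : (0:ℝ) < 2^k := by positivity
  linarith

lemma sG_neg {k j : ℕ} (h : j < k) : sG k j < 0 := by
  have h1 : (2:ℝ)^j - 2^k < 0 := by linarith [two_pow_lt h]
  have h2 : (0:ℝ) < 1 + 2^j := by positivity
  exact div_neg_of_pos_of_neg h2 h1

lemma sL_self (k : ℕ) : sL k k = ∏ j ∈ Finset.range k, sG k j := by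
  rw [sL, Finset.range_add_one, Finset.erase_insert (by simp)]

lemma sL_step {n k : ℕ} (h : k ≤ n) : sL (n+1) k = sL n k * sG k (n+1) := by
  rw [sL, sL, Finset.range_add_one (n := n+1),
    Finset.erase_insert_of_ne (by omega : n+1 ≠ k),
    Finset.prod_insert (by simp), mul_comm]

lemma sL_sign_pos {n k : ℕ} (h : k ≤ n) : 0 < (-1:ℝ)^k * sL n k := by
  induction n, h using Nat.le_induction with
  | base =>
    rw [sL_self]
    have : (-1:ℝ)^k * ∏ j ∈ Finset.range k, sG k j
        = ∏ j ∈ Finset.range k, (-(sG k j)) := by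
      have : ∀ j ∈ Finset.range k, -(sG k j) = (-1) * sG k j := fun j _ => by ring
      rw [Finset.prod_congr rfl this, Finset.prod_mul_distrib,
        Finset.prod_const, Finset.card_range]
    rw [this]
    exact Finset.prod_pos fun j hj => by
      simpa using (sG_neg (Finset.mem_range.mp hj))
  | succ n hn ih =>
    rw [sL_step hn, ← mul_assoc]
    exact mul_pos ih (lt_of_lt_of_le one_pos (sG_ge_one (by omega)))

lemma sL_sign_mono {n k : ℕ} (h : k ≤ n) :
    (-1:ℝ)^k * sL n k ≤ (-1:ℝ)^k * sL (n+1) k := by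
  rw [sL_step h, ← mul_assoc]
  nth_rewrite 1 [← mul_one ((-1:ℝ)^k * sL n k)]
  exact mul_le_mul_of_nonneg_left (sG_ge_one (by omega)) (sL_sign_pos h).le

noncomputable def sB (k : ℕ) : ℝ := Real.exp 4 * 2^(k*(k+1)/2) / 2^(k*(k-1))

lemma sB_pos (k : ℕ) : 0 < sB k := by rw [sB]; positivity

-- front product bound
lemma front_bound (k : ℕ) :
    ∏ j ∈ Finset.range k, |sG k j| ≤ (2:ℝ)^(k*(k+1)/2) / 2^(k*(k-1)) := by
  have step : ∀ j ∈ Finset.range k, |sG k j| ≤ (2:ℝ)^(j+1) / 2^(k-1) := by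
    intro j hj
    have hj' : j < k := Finset.mem_range.mp hj
    have hk1 : j ≤ k - 1 := by omega
    have hd : (0:ℝ) < 2^k - 2^j := by linarith [two_pow_lt hj']
    have habs : |sG k j| = (1 + (2:ℝ)^j) / (2^k - 2^j) := by
      rw [sG, abs_div, abs_of_pos (by positivity), abs_of_neg (by linarith), neg_sub]
    rw [habs]
    have h1 : (1:ℝ) + 2^j ≤ 2^(j+1) := by
      have : (1:ℝ) ≤ 2^j := one_le_pow₀ (by norm_num)
      rw [pow_succ]; linarith
    have h2 : (2:ℝ)^(k-1) ≤ 2^k - 2^j := by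
      have e : (2:ℝ)^k = 2^(k-1) * 2 := by
        rw [← pow_succ]; congr 1; omega
      have : (2:ℝ)^j ≤ 2^(k-1) := pow_le_pow_right₀ (by norm_num) hk1
      linarith
    exact div_le_div₀ (by positivity) h1 (by positivity) h2
  calc ∏ j ∈ Finset.range k, |sG k j| ≤ ∏ j ∈ Finset.range k, (2:ℝ)^(j+1) / 2^(k-1) :=
        Finset.prod_le_prod (fun j _ => abs_nonneg _) step
    _ = (2:ℝ)^(k*(k+1)/2) / 2^(k*(k-1)) := by
        rw [Finset.prod_div_distrib, Finset.prod_const, Finset.prod_pow_eq_pow_sum,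
          Finset.card_range, ← pow_mul]
        have hs : ∑ j ∈ Finset.range k, (j+1) = k*(k+1)/2 := by
          have h2 : (∑ i ∈ Finset.range k, (i+1)) = ∑ i ∈ Finset.range (k+1), i := by
            rw [Finset.sum_range_succ']; simp
          rw [h2, Finset.sum_range_id]
          simp [Nat.mul_comm]
        rw [hs, Nat.mul_comm (k-1) k]

-- tail product bound
lemma tail_bound (k n : ℕ) :
    ∏ j ∈ Finset.Ico (k+1) (n+1), sG k j ≤ Real.exp 4 := by
  have hfac : ∀ j ∈ Finset.Ico (k+1) (n+1), sG k j ≤ Real.exp (2*(1+(2:ℝ)^k) * (1/2)^j) := by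
    intro j hj
    obtain ⟨hj1, _⟩ := Finset.mem_Ico.mp hj
    have hd : (0:ℝ) < 2^j - 2^k := by linarith [two_pow_lt (by omega : k < j)]
    have hd2 : (2:ℝ)^j / 2 ≤ 2^j - 2^k := by
      have e : (2:ℝ)^j = 2^(j-1) * 2 := by rw [← pow_succ]; congr 1; omega
      have : (2:ℝ)^k ≤ 2^(j-1) := pow_le_pow_right₀ (by norm_num) (by omega)
      linarith
    have key : sG k j ≤ 1 + 2*(1+(2:ℝ)^k) * (1/2)^j := by
      rw [sG, div_le_iff₀ hd]
      have hp : ((1:ℝ)/2)^j = ((2:ℝ)^j)⁻¹ := by rw [one_div, inv_pow]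
      rw [hp]
      have h2j : (0:ℝ) < 2^j := by positivity
      have hinv : ((2:ℝ)^j)⁻¹ * 2^j = 1 := inv_mul_cancel₀ (ne_of_gt h2j)
      have hu0 : (0:ℝ) ≤ ((2:ℝ)^j)⁻¹ := by positivity
      have hkey : 2*(2:ℝ)^k * ((2:ℝ)^j)⁻¹ ≤ 1 := by
        have h1 : (2:ℝ)^(k+1) ≤ 2^j := pow_le_pow_right₀ (by norm_num) hj1
        have : 2*(2:ℝ)^k = 2^(k+1) := by rw [pow_succ]; ring
        rw [this, ← hinv]
        exact mul_le_mul_of_nonneg_right h1 hu0 |>.trans_eq (mul_comm _ _)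
      have h3 : 2*(2:ℝ)^k * ((2:ℝ)^j)⁻¹ * 2^k ≤ 2^k := by
        simpa using mul_le_mul_of_nonneg_right hkey (by positivity : (0:ℝ) ≤ 2^k)
      nlinarith [two_pow_lt (by omega : k < j), h2j, hd2, hinv, hkey, h3]
    calc sG k j ≤ 1 + 2*(1+(2:ℝ)^k) * (1/2)^j := key
      _ ≤ Real.exp (2*(1+(2:ℝ)^k) * (1/2)^j) := by
          have := Real.add_one_le_exp (2*(1+(2:ℝ)^k) * (1/2)^j)
          linarith
  calc ∏ j ∈ Finset.Ico (k+1) (n+1), sG k j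
      ≤ ∏ j ∈ Finset.Ico (k+1) (n+1), Real.exp (2*(1+(2:ℝ)^k) * (1/2)^j) := by
        refine Finset.prod_le_prod (fun j hj => ?_) hfac
        obtain ⟨hj1, _⟩ := Finset.mem_Ico.mp hj
        have hd : (0:ℝ) < 2^j - 2^k := by linarith [two_pow_lt (by omega : k < j)]
        rw [sG]; positivity
    _ = Real.exp (∑ j ∈ Finset.Ico (k+1) (n+1), 2*(1+(2:ℝ)^k) * (1/2)^j) :=
        (Real.exp_sum _ _).symm
    _ ≤ Real.exp 4 := by
        refine Real.exp_le_exp.mpr ?_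
        rw [← Finset.mul_sum]
        have hsum : ∑ j ∈ Finset.Ico (k+1) (n+1), ((1:ℝ)/2)^j ≤ (1/2)^(k+1) * 2 := by
          rcases le_or_gt (k+1) (n+1) with h | h
          · rw [Finset.sum_Ico_eq_sum_range]
            have : ∀ i ∈ Finset.range (n+1-(k+1)), ((1:ℝ)/2)^(k+1+i) = (1/2)^(k+1) * (1/2)^i :=
              fun i _ => by rw [pow_add]
            rw [Finset.sum_congr rfl this, ← Finset.mul_sum]
            exact mul_le_mul_of_nonneg_left (sum_geometric_two_le _) (by positivity)
          · rw [Finset.Ico_eq_empty (by omega), Finset.sum_empty]; positivity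
        have h1 : (0:ℝ) < 2*(1+(2:ℝ)^k) := by positivity
        calc 2*(1+(2:ℝ)^k) * ∑ j ∈ Finset.Ico (k+1) (n+1), ((1:ℝ)/2)^j
            ≤ 2*(1+(2:ℝ)^k) * ((1/2)^(k+1) * 2) := mul_le_mul_of_nonneg_left hsum h1.le
          _ ≤ 4 := by
              have hp : ((1:ℝ)/2)^(k+1) = ((2:ℝ)^(k+1))⁻¹ := by rw [one_div, inv_pow]
              rw [hp]
              have h2k : (1:ℝ) ≤ 2^k := one_le_pow₀ (by norm_num)
              have e : (2:ℝ)^(k+1) = 2 * 2^k := by rw [pow_succ]; ring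
              have h2k1 : (0:ℝ) < 2^(k+1) := by positivity
              have hinv : ((2:ℝ)^(k+1))⁻¹ * 2^(k+1) = 1 := inv_mul_cancel₀ (ne_of_gt h2k1)
              nlinarith [inv_nonneg.mpr h2k1.le]

lemma erase_split {n k : ℕ} (h : k ≤ n) :
    (Finset.range (n+1)).erase k = Finset.range k ∪ Finset.Ico (k+1) (n+1) := by
  ext j
  simp only [Finset.mem_erase, Finset.mem_range, Finset.mem_union, Finset.mem_Ico]
  omega

lemma sL_abs_le {n k : ℕ} (h : k ≤ n) : |sL n k| ≤ sB k := by
  have hdisj : Disjoint (Finset.range k) (Finset.Ico (k+1) (n+1)) := by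
    rw [Finset.disjoint_left]
    intro j hj hj'
    simp only [Finset.mem_range] at hj
    simp only [Finset.mem_Ico] at hj'
    omega
  rw [sL, erase_split h, Finset.abs_prod, Finset.prod_union hdisj]
  have h2 : ∏ j ∈ Finset.Ico (k+1) (n+1), |sG k j| = ∏ j ∈ Finset.Ico (k+1) (n+1), sG k j := by
    refine Finset.prod_congr rfl fun j hj => ?_
    obtain ⟨hj1, _⟩ := Finset.mem_Ico.mp hj
    have hd : (0:ℝ) < 2^j - 2^k := by linarith [two_pow_lt (by omega : k < j)]
    rw [abs_of_nonneg]
    rw [sG]; positivity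
  rw [h2, sB]
  calc (∏ j ∈ Finset.range k, |sG k j|) * ∏ j ∈ Finset.Ico (k+1) (n+1), sG k j
      ≤ ((2:ℝ)^(k*(k+1)/2) / 2^(k*(k-1))) * Real.exp 4 := by
        refine mul_le_mul (front_bound k) (tail_bound k n) ?_ (by positivity)
        refine Finset.prod_nonneg fun j hj => ?_
        obtain ⟨hj1, _⟩ := Finset.mem_Ico.mp hj
        have hd : (0:ℝ) < 2^j - 2^k := by linarith [two_pow_lt (by omega : k < j)]
        rw [sG]; positivity
    _ = Real.exp 4 * 2^(k*(k+1)/2) / 2^(k*(k-1)) := by ring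

lemma sBq_summable (q : ℕ) : Summable (fun k => sB k * 2^(k*q)) := by
  refine summable_of_ratio_norm_eventually_le (r := 1/2) (by norm_num) ?_
  filter_upwards [eventually_atTop.mpr ⟨q+3, fun k hk => hk⟩] with k hk
  have hpos : ∀ m, (0:ℝ) < sB m * 2^(m*q) := fun m => by
    have := sB_pos m; positivity
  rw [Real.norm_eq_abs, Real.norm_eq_abs, abs_of_pos (hpos _), abs_of_pos (hpos _)]
  obtain ⟨m, rfl⟩ : ∃ m, k = m + 1 := ⟨k-1, by omega⟩
  have hA : (m+1+1)*((m+1+1)+1)/2 = (m+1)*((m+1)+1)/2 + (m+2) := by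
    have h1 : (m+1+1)*((m+1+1)+1) = (m+1)*((m+1)+1) + 2*(m+2) := by ring
    have h2 : (m+1)*((m+1)+1) % 2 = 0 := Nat.even_iff.mp (Nat.even_mul_succ_self (m+1))
    omega
  have hB : (m+1+1)*((m+1+1)-1) = (m+1)*((m+1)-1) + 2*(m+1) := by
    simp only [Nat.add_sub_cancel]
    ring
  have hQ : (m+1+1)*q = (m+1)*q + q := by ring
  rw [sB, sB, hA, hB, hQ, pow_add (2:ℝ) ((m+1)*((m+1)+1)/2) (m+2),
    pow_add (2:ℝ) ((m+1)*((m+1)-1)) (2*(m+1)), pow_add (2:ℝ) ((m+1)*q) q]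
  have key : (2:ℝ)^(m+2) * 2^q ≤ 1/2 * 2^(2*(m+1)) := by
    rw [← pow_add]
    have h := pow_le_pow_right₀ (by norm_num : (1:ℝ) ≤ 2)
      (show m+2+q+1 ≤ 2*(m+1) by omega)
    have h2 : (2:ℝ)^(m+2+q+1) = 2 * 2^(m+2+q) := by rw [pow_succ]; ring
    rw [h2] at h
    linarith
  have hb2 : (0:ℝ) < 2^(2*(m+1)) := by positivity
  set E := Real.exp 4
  set A := (2:ℝ)^((m+1)*((m+1)+1)/2)
  set B := (2:ℝ)^((m+1)*((m+1)-1))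
  set Q := (2:ℝ)^((m+1)*q)
  have hE : 0 < E := Real.exp_pos _
  have hA0 : 0 < A := by positivity
  have hB0 : 0 < B := by positivity
  have hQ0 : 0 < Q := by positivity
  calc E * (A * 2^(m+2)) / (B * 2^(2*(m+1))) * (Q * 2^q)
      = (E * A / B * Q) * ((2:ℝ)^(m+2) * 2^q / 2^(2*(m+1))) := by
        field_simp
    _ ≤ (E * A / B * Q) * (1/2) := by
        refine mul_le_mul_of_nonneg_left ?_ (by positivity)
        rw [div_le_iff₀ hb2]
        linarith
    _ = 1/2 * (E * A / B * Q) := by ring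

noncomputable def sX (j : ℕ) : ℝ := -(2:ℝ)^j

lemma sX_injOn (s : Finset ℕ) : Set.InjOn sX s := by
  have : Function.Injective sX := by
    intro a b hab
    have : (2:ℝ)^a = 2^b := by simpa [sX, neg_inj] using hab
    exact Nat.pow_right_injective le_rfl (by exact_mod_cast this)
  exact this.injOn

lemma sL_eq_basis_eval (n k : ℕ) :
    sL n k = eval 1 (Lagrange.basis (Finset.range (n+1)) sX k) := by
  rw [Lagrange.basis, eval_prod]
  refine Finset.prod_congr rfl fun j _ => ?_
  rw [Lagrange.basisDivisor]
  simp only [eval_mul, eval_C, eval_sub, eval_X, sX, sG]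
  rw [inv_mul_eq_div]
  ring_nf

lemma seeley_finite {n q : ℕ} (h : q ≤ n) :
    ∑ k ∈ Finset.range (n+1), sX k ^ q * sL n k = 1 := by
  have hdeg : ((X:ℝ[X])^q).degree < #(Finset.range (n+1)) := by
    rw [degree_X_pow, Finset.card_range]
    exact_mod_cast Nat.lt_succ_of_le h
  have hinterp := Lagrange.eq_interpolate (sX_injOn (Finset.range (n+1))) hdeg
  have := congrArg (eval 1) hinterp
  simp only [Lagrange.interpolate_apply, eval_pow, eval_X, one_pow, eval_finset_sum,
    eval_mul, eval_C, eval_pow] at this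
  rw [eq_comm]
  rw [this]
  refine Finset.sum_congr rfl fun k _ => ?_
  rw [sL_eq_basis_eval]

noncomputable def sM (k m : ℕ) : ℝ := (-1:ℝ)^k * sL (k+m) k
noncomputable def sc (k : ℕ) : ℝ := (-1:ℝ)^k * ⨆ m, sM k m

lemma neg_one_sq_pow (k : ℕ) : (-1:ℝ)^k * (-1:ℝ)^k = 1 := by
  rw [← pow_add]
  exact Even.neg_one_pow ⟨k, rfl⟩

lemma sM_mono (k : ℕ) : Monotone (sM k) := by
  refine monotone_nat_of_le_succ fun m => ?_
  have : k + (m+1) = (k+m) + 1 := rfl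
  rw [sM, sM, this]
  exact sL_sign_mono (by omega)

lemma sM_bdd (k : ℕ) : BddAbove (Set.range (sM k)) := by
  refine ⟨sB k, fun x hx => ?_⟩
  obtain ⟨m, rfl⟩ := hx
  calc sM k m ≤ |sM k m| := le_abs_self _
    _ = |sL (k+m) k| := by
        rw [sM, abs_mul, abs_pow, abs_neg, abs_one, one_pow, one_mul]
    _ ≤ sB k := sL_abs_le (by omega)

lemma sc_tendsto (k : ℕ) : Tendsto (fun n => sL n k) atTop (𝓝 (sc k)) := by
  have h1 : Tendsto (sM k) atTop (𝓝 (⨆ m, sM k m)) :=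
    tendsto_atTop_ciSup (sM_mono k) (sM_bdd k)
  have h2 : Tendsto (fun m => (-1:ℝ)^k * sM k m) atTop (𝓝 (sc k)) := h1.const_mul _
  have h3 : (fun m => (-1:ℝ)^k * sM k m) = fun m => sL (m+k) k := by
    funext m
    rw [sM, ← mul_assoc, neg_one_sq_pow, one_mul, Nat.add_comm]
  rw [h3] at h2
  exact (tendsto_add_atTop_iff_nat k).mp h2

lemma sc_abs_le (k : ℕ) : |sc k| ≤ sB k :=
  le_of_tendsto (sc_tendsto k).abs
    (eventually_atTop.mpr ⟨k, fun n hn => sL_abs_le hn⟩)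

lemma sX_abs_pow (k q : ℕ) : |sX k ^ q| = 2^(k*q) := by
  rw [abs_pow, sX, abs_neg, abs_of_pos (by positivity : (0:ℝ) < 2^k), ← pow_mul]

/-- The Seeley sequence: there is a sequence `(cₙ)` of reals such that
`∑ⱼ cⱼ·(-2ʲ)^q = 1` for every `q ∈ ℕ`, and `∑ⱼ |cⱼ|·(2ʲ)^q < ∞` for every `q ∈ ℕ`. -/
theorem seeley_sequence :
    ∃ c : ℕ → ℝ,
      (∀ q : ℕ, HasSum (fun j : ℕ => c j * (-(2:ℝ) ^ j) ^ q) 1) ∧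
      (∀ q : ℕ, Summable (fun j : ℕ => |c j| * ((2:ℝ) ^ j) ^ q)) := by
  refine ⟨sc, fun q => ?_, fun q => ?_⟩
  · -- step 1: bound for limit function
    have hgb : ∀ k, ‖sX k ^ q * sc k‖ ≤ sB k * 2^(k*q) := by
      intro k
      rw [Real.norm_eq_abs, abs_mul, sX_abs_pow]
      rw [mul_comm (sB k)]
      exact mul_le_mul_of_nonneg_left (sc_abs_le k) (by positivity)
    have hg_summable : Summable (fun k => sX k ^ q * sc k) :=
      (sBq_summable q).of_norm_bounded hgb
    -- dominated convergence
    set F : ℕ → ℕ → ℝ := fun n k => if k ≤ n then sX k ^ q * sL n k else 0 with hF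
    have h_bound : ∀ n k, ‖F n k‖ ≤ sB k * 2^(k*q) := by
      intro n k
      rw [hF]
      by_cases h : k ≤ n
      · simp only [if_pos h]
        rw [Real.norm_eq_abs, abs_mul, sX_abs_pow, mul_comm (sB k)]
        exact mul_le_mul_of_nonneg_left (sL_abs_le h) (by positivity)
      · simp only [if_neg h, norm_zero]
        have := sB_pos k
        positivity
    have h_lim : ∀ k, Tendsto (F · k) atTop (𝓝 (sX k ^ q * sc k)) := by
      intro k
      refine Tendsto.congr' ?_ ((sc_tendsto k).const_mul (sX k ^ q))
      filter_upwards [eventually_atTop.mpr ⟨k, fun n hn => hn⟩] with n hn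
      rw [hF]
      simp only [if_pos hn]
    have htan := tendsto_tsum_of_dominated_convergence (sBq_summable q) h_lim
      (Eventually.of_forall h_bound)
    have heval : ∀ᶠ n in atTop, (∑' k, F n k) = 1 := by
      filter_upwards [eventually_atTop.mpr ⟨q, fun n hn => hn⟩] with n hn
      have hts : (∑' k, F n k) = ∑ k ∈ Finset.range (n+1), F n k := by
        refine tsum_eq_sum fun k hk => ?_
        rw [hF]
        exact if_neg (by simp only [Finset.mem_range] at hk; omega)
      rw [hts, ← seeley_finite hn]
      refine Finset.sum_congr rfl fun k hk => ?_
      rw [hF]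
      exact if_pos (by simp only [Finset.mem_range] at hk; omega)
    have h1 : Tendsto (fun _ : ℕ => (1:ℝ)) atTop (𝓝 (∑' k, sX k ^ q * sc k)) :=
      htan.congr' heval
    have h2 : (∑' k, sX k ^ q * sc k) = 1 :=
      tendsto_nhds_unique h1 tendsto_const_nhds
    have h3 : HasSum (fun k => sX k ^ q * sc k) 1 := h2 ▸ hg_summable.hasSum
    have h4 : (fun j : ℕ => sc j * (-(2:ℝ)^j)^q) = fun k => sX k ^ q * sc k := by
      funext j
      rw [sX, mul_comm]
    rw [h4]
    exact h3
  · refine Summable.of_nonneg_of_le (fun j => mul_nonneg (abs_nonneg _) (by positivity))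
      (fun j => ?_) (sBq_summable q)
    have h1 : ((2:ℝ)^j)^q = 2^(j*q) := by rw [← pow_mul]
    have h2 : (0:ℝ) ≤ 2^(j*q) := by positivity
    calc |sc j| * ((2:ℝ)^j)^q = 2^(j*q) * |sc j| := by rw [h1]; ring
      _ ≤ 2^(j*q) * sB j := mul_le_mul_of_nonneg_left (sc_abs_le j) h2
      _ = sB j * 2^(j*q) := by ring
end

section
/- Let H, F be Hausdorff locally convex spaces, U ⊆ H open nonempty, A ⊆ U closed in U, and S ⊆ H with U ⊆ S. Suppose A is harmonic: for each (x,v) ∈ A × H there exist δ > 0 and a continuous path γ : [0,1] → H with γ(0) = 0 such that x + γ((0,1]) + [−δ,δ]·v ⊆ U∖A. Let f ∈ C^k(U∖A, F) (k ∈ ℕ∪{∞}), and for each 0 ≤ ℓ ≤ k let Φ^ℓ : S × H^ℓ → F be continuous with Φ^ℓ restricted to (U∖A) × H^ℓ equal to d^ℓ f. Then f̃ := Φ⁰|_U is of class C^k on U with d^ℓ f̃ = Φ^ℓ|_{U×H^ℓ} for all 0 ≤ ℓ ≤ k. -/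
open Filter Topology Set

/-- Directional (Gateaux) derivative in the Bastiani sense. -/
def HasDirDeriv {E F : Type*} [AddCommGroup E] [Module ℝ E] [TopologicalSpace E]
    [AddCommGroup F] [Module ℝ F] [TopologicalSpace F]
    (f : E → F) (x v : E) (L : F) : Prop :=
  Tendsto (fun t : ℝ => t⁻¹ • (f (x + t • v) - f x)) (𝓝[≠] (0:ℝ)) (𝓝 L)

/-- `D` is the family of iterated Bastiani differentials of `f` on `U` up to order `k`:
`D ℓ x v` represents `d^ℓ f(x; v 0, …, v (ℓ-1))`; `D (ℓ+1) x v` is the directional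
derivative of `y ↦ D ℓ y v` at `x` in direction `v ℓ`, and each `D ℓ` is jointly
continuous on `U` (so `f` is of class `C^k` in the Bastiani sense, with differentials `D`). -/
structure BastianiFamily {E F : Type*} [AddCommGroup E] [Module ℝ E] [TopologicalSpace E]
    [AddCommGroup F] [Module ℝ F] [TopologicalSpace F]
    (k : ℕ∞) (U : Set E) (f : E → F) (D : ℕ → E → (ℕ → E) → F) : Prop where
  zeroth : ∀ x v, D 0 x v = f x
  deriv : ∀ ℓ : ℕ, (ℓ : ℕ∞) < k → ∀ x ∈ U, ∀ v : ℕ → E,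
    HasDirDeriv (fun y => D ℓ y v) x (v ℓ) (D (ℓ + 1) x v)
  cont : ∀ ℓ : ℕ, (ℓ : ℕ∞) ≤ k →
    ContinuousOn (fun p : E × (ℕ → E) => D ℓ p.1 p.2) (U ×ˢ univ)

/-- A closed-in-`U` subset `A` is harmonic if from each of its points one can escape
`A` along a continuous path, stably under perturbations in any fixed direction. -/
def IsHarmonic {H : Type*} [AddCommGroup H] [Module ℝ H] [TopologicalSpace H]
    (U A : Set H) : Prop :=
  ∀ x ∈ A, ∀ v : H, ∃ δ : ℝ, 0 < δ ∧ ∃ γ : ℝ → H,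
    ContinuousOn γ (Icc 0 1) ∧ γ 0 = 0 ∧
    ∀ s ∈ Ioc (0:ℝ) 1, ∀ r ∈ Icc (-δ) δ, x + γ s + r • v ∈ U \ A

lemma closedConvexBasis (F : Type*) [AddCommGroup F] [Module ℝ F] [TopologicalSpace F]
    [IsTopologicalAddGroup F] [ContinuousSMul ℝ F] [LocallyConvexSpace ℝ F] :
    (𝓝 (0:F)).HasBasis (fun C : Set F => C ∈ 𝓝 0 ∧ Convex ℝ C ∧ IsClosed C) id := by
  rw [Filter.hasBasis_self]
  intro N hN
  obtain ⟨N₁, ⟨hN₁mem, hN₁cl⟩, hN₁sub⟩ := (closed_nhds_basis (0:F)).mem_iff.mp hN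
  obtain ⟨N₂, ⟨hN₂mem, hN₂conv⟩, hN₂sub⟩ :=
    (LocallyConvexSpace.convex_basis (𝕜 := ℝ) (0:F)).mem_iff.mp hN₁mem
  exact ⟨closure N₂, mem_of_superset hN₂mem subset_closure,
    ⟨hN₂conv.closure, isClosed_closure⟩,
    ((closure_minimal hN₂sub hN₁cl).trans hN₁sub)⟩

lemma mvt_convex {F : Type*} [AddCommGroup F] [Module ℝ F] [TopologicalSpace F]
    [IsTopologicalAddGroup F] [ContinuousSMul ℝ F] [LocallyConvexSpace ℝ F]
    {g : ℝ → F} {K : Set F} (hK : Convex ℝ K) (hKc : IsClosed K)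
    {a b : ℝ} (hab : a < b) (hg : ContinuousOn g (Icc a b))
    (hd : ∀ t ∈ Ioo a b, ∃ L ∈ K,
      Tendsto (fun h : ℝ => h⁻¹ • (g (t+h) - g t)) (𝓝[≠] (0:ℝ)) (𝓝 L)) :
    (b - a)⁻¹ • (g b - g a) ∈ K := by
  by_contra hmem
  obtain ⟨lam, u, hu1, hu2⟩ := geometric_hahn_banach_closed_point hK hKc hmem
  choose! L hLK hLt using hd
  have hphi : ∀ t ∈ Ioo a b, HasDerivAt (fun y => lam (g y)) (lam (L t)) t := by
    intro t ht
    have hL := hLt t ht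
    have hsub : Tendsto (fun y : ℝ => y - t) (𝓝[≠] t) (𝓝[≠] (0:ℝ)) := by
      rw [tendsto_nhdsWithin_iff]
      constructor
      · have : Tendsto (fun y : ℝ => y - t) (𝓝 t) (𝓝 (t - t)) :=
          (continuous_id.sub continuous_const).tendsto t
        simpa using this.mono_left nhdsWithin_le_nhds
      · filter_upwards [self_mem_nhdsWithin] with y hy
        exact sub_ne_zero.mpr hy
    have h2 : Tendsto (fun y : ℝ => (y - t)⁻¹ • (g (t + (y - t)) - g t)) (𝓝[≠] t)
        (𝓝 (L t)) := hL.comp hsub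
    have h3 : Tendsto (fun y : ℝ => (y - t)⁻¹ • (g y - g t)) (𝓝[≠] t) (𝓝 (L t)) := by
      refine h2.congr fun y => by rw [show t + (y - t) = y from by ring]
    rw [hasDerivAt_iff_tendsto_slope]
    have h4 := (lam.continuous.tendsto (L t)).comp h3
    refine h4.congr fun y => ?_
    simp [slope, map_sub, map_smul, smul_eq_mul, Function.comp]
  obtain ⟨c, hc, heq⟩ := exists_hasDerivAt_eq_slope (fun y => lam (g y)) (fun t => lam (L t))
    hab (lam.continuous.comp_continuousOn hg) hphi
  have h1 : lam (L c) < u := hu1 _ (hLK c hc)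
  have h2 : u < lam ((b - a)⁻¹ • (g b - g a)) := hu2
  rw [map_smul, smul_eq_mul, map_sub] at h2
  rw [div_eq_inv_mul] at heq
  linarith

/-- Extension across a harmonic set: let `U ⊆ H` be open nonempty, `A ⊆ U` closed in `U`
and harmonic, `U ⊆ S`, and `f` of class `C^k` on `U \ A` (Bastiani differentials `Df`).
If each `d^ℓ f` (`0 ≤ ℓ ≤ k`) admits a continuous extension `Φ ℓ` to `S × H^ℓ`, then
`f̃ := Φ⁰|_U` is of class `C^k` on `U` with `d^ℓ f̃ = Φ ℓ` on `U × H^ℓ` for all `0 ≤ ℓ ≤ k`. -/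
theorem harmonic_extension
    {H F : Type*}
    [AddCommGroup H] [Module ℝ H] [TopologicalSpace H] [IsTopologicalAddGroup H]
    [ContinuousSMul ℝ H] [LocallyConvexSpace ℝ H] [T2Space H]
    [AddCommGroup F] [Module ℝ F] [TopologicalSpace F] [IsTopologicalAddGroup F]
    [ContinuousSMul ℝ F] [LocallyConvexSpace ℝ F] [T2Space F]
    (k : ℕ∞) {U A S : Set H} (hU : IsOpen U) (hUne : U.Nonempty)
    (hAU : A ⊆ U) (hAclosed : U ∩ closure A ⊆ A)
    (hharm : IsHarmonic U A) (hUS : U ⊆ S)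
    (f : H → F) (Df : ℕ → H → (ℕ → H) → F)
    (hf : BastianiFamily k (U \ A) f Df)
    (Φ : ℕ → H → (ℕ → H) → F)
    (hΦcont : ∀ ℓ : ℕ, (ℓ : ℕ∞) ≤ k →
      ContinuousOn (fun p : H × (ℕ → H) => Φ ℓ p.1 p.2) (S ×ˢ univ))
    (hΦagree : ∀ ℓ : ℕ, (ℓ : ℕ∞) ≤ k → ∀ x ∈ U \ A, ∀ v : ℕ → H, Φ ℓ x v = Df ℓ x v)
    (hΦ0 : ∀ x v, Φ 0 x v = Φ 0 x 0) :
    BastianiFamily k U (fun x => Φ 0 x 0) Φ := by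
  have hVopen : IsOpen (U \ A) := by
    have hEq : U \ A = U ∩ (closure A)ᶜ := by
      ext y; constructor
      · rintro ⟨hyU, hyA⟩; exact ⟨hyU, fun hc => hyA (hAclosed ⟨hyU, hc⟩)⟩
      · rintro ⟨hyU, hc⟩; exact ⟨hyU, fun hA => hc (subset_closure hA)⟩
    rw [hEq]; exact hU.inter isClosed_closure.isOpen_compl
  refine ⟨hΦ0, ?_, ?_⟩
  · -- deriv
    intro ℓ hℓ x hxU v
    set w := v ℓ with hw
    have hℓk : (ℓ : ℕ∞) ≤ k := hℓ.le
    have hℓ1 : ((ℓ + 1 : ℕ) : ℕ∞) ≤ k := by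
      push_cast
      exact Order.add_one_le_of_lt hℓ
    -- obtain the escape path (trivial if x ∉ A)
    obtain ⟨δ, hδ, γ, hγc, hγ0, hγ⟩ : ∃ δ : ℝ, 0 < δ ∧ ∃ γ : ℝ → H,
        ContinuousOn γ (Icc 0 1) ∧ γ 0 = 0 ∧
        ∀ s ∈ Ioc (0:ℝ) 1, ∀ r ∈ Icc (-δ) δ, x + γ s + r • w ∈ U \ A := by
      by_cases hxA : x ∈ A
      · exact hharm x hxA w
      · have hcont : Continuous (fun r : ℝ => x + r • w) :=
          continuous_const.add (continuous_id.smul continuous_const)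
        have hx0 : x + (0:ℝ) • w ∈ U \ A := by simpa using (⟨hxU, hxA⟩ : x ∈ U \ A)
        have hev : ∀ᶠ r in 𝓝 (0:ℝ), x + r • w ∈ U \ A :=
          hcont.continuousAt.eventually_mem (hVopen.mem_nhds hx0)
        obtain ⟨ε, hε, hball⟩ := Metric.eventually_nhds_iff.mp hev
        refine ⟨ε/2, by positivity, fun _ => 0, continuousOn_const, rfl, fun s hs r hr => ?_⟩
        have : x + r • w ∈ U \ A := by
          apply hball
          rw [Real.dist_eq, sub_zero]
          have := abs_le.mpr ⟨hr.1, hr.2⟩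
          linarith
        simpa using this
    show Tendsto (fun t : ℝ => t⁻¹ • (Φ ℓ (x + t • w) v - Φ ℓ x v)) (𝓝[≠] (0:ℝ))
      (𝓝 (Φ (ℓ + 1) x v))
    rw [← tendsto_sub_nhds_zero_iff, (closedConvexBasis F).tendsto_right_iff]
    rintro C ⟨hCmem, hCconv, hCcl⟩
    set K : Set F := (fun y => y - Φ (ℓ + 1) x v) ⁻¹' C with hKdef
    have hsubcont : Continuous (fun y : F => y - Φ (ℓ + 1) x v) :=
      continuous_id.sub continuous_const
    have hKmem : K ∈ 𝓝 (Φ (ℓ + 1) x v) := by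
      apply hsubcont.continuousAt.preimage_mem_nhds
      rw [sub_self]; exact hCmem
    have hKcl : IsClosed K := hCcl.preimage hsubcont
    have hKconv : Convex ℝ K := by
      intro y₁ h₁ y₂ h₂ a b ha hb hab
      have e : a • (y₁ - Φ (ℓ + 1) x v) + b • (y₂ - Φ (ℓ + 1) x v)
          = a • y₁ + b • y₂ - (a + b) • Φ (ℓ + 1) x v := by
        rw [smul_sub, smul_sub, add_smul]; abel
      have : a • y₁ + b • y₂ - Φ (ℓ + 1) x v ∈ C := by
        rw [← one_smul ℝ (Φ (ℓ + 1) x v), ← hab, ← e]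
        exact hCconv h₁ h₂ ha hb hab
      exact this
    -- choose τ₀
    have hcont₀ : Continuous (fun r : ℝ => x + r • w) :=
      continuous_const.add (continuous_id.smul continuous_const)
    have hx0U : x + (0:ℝ) • w ∈ U := by simpa using hxU
    obtain ⟨ε₀, hε₀, hb₀⟩ := Metric.eventually_nhds_iff.mp
      (hcont₀.continuousAt.eventually_mem (hU.mem_nhds hx0U))
    set τ₀ : ℝ := min (ε₀/2) δ with hτ₀def
    have hτ₀pos : 0 < τ₀ := lt_min (by positivity) hδ
    have hτ₀δ : τ₀ ≤ δ := min_le_right _ _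
    have hτ₀U : ∀ u : ℝ, |u| ≤ τ₀ → x + u • w ∈ U := by
      intro u hu
      apply hb₀
      rw [Real.dist_eq, sub_zero]
      have h1 : τ₀ ≤ ε₀/2 := min_le_left _ _
      linarith
    -- the two-variable map ψ and its continuity at (0,0)
    have hmaps : ∀ p ∈ Icc (0:ℝ) 1 ×ˢ Icc (-τ₀) τ₀, x + γ p.1 + p.2 • w ∈ S := by
      rintro ⟨s, u⟩ ⟨hs, hu⟩
      rcases eq_or_lt_of_le hs.1 with h0 | h0
      · rw [← h0, hγ0, add_zero]
        exact hUS (hτ₀U u (abs_le.mpr ⟨hu.1, hu.2⟩))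
      · refine hUS (hγ s ⟨h0, hs.2⟩ u ⟨?_, ?_⟩).1
        · linarith [hu.1]
        · linarith [hu.2]
    have hxpt : x + γ 0 + (0:ℝ) • w = x := by simp [hγ0]
    have h00 : ((0:ℝ), (0:ℝ)) ∈ Icc (0:ℝ) 1 ×ˢ Icc (-τ₀) τ₀ :=
      ⟨⟨le_refl 0, zero_le_one⟩, ⟨neg_nonpos.mpr hτ₀pos.le, hτ₀pos.le⟩⟩
    have hψcont : ContinuousOn
        (fun p : ℝ × ℝ => Φ (ℓ + 1) (x + γ p.1 + p.2 • w) v)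
        (Icc (0:ℝ) 1 ×ˢ Icc (-τ₀) τ₀) := by
      have hγfst : ContinuousOn (fun p : ℝ × ℝ => γ p.1)
          (Icc (0:ℝ) 1 ×ˢ Icc (-τ₀) τ₀) :=
        hγc.comp continuous_fst.continuousOn fun p hp => hp.1
      have hinner : ContinuousOn
          (fun p : ℝ × ℝ => ((x + γ p.1 + p.2 • w, v) : H × (ℕ → H)))
          (Icc (0:ℝ) 1 ×ˢ Icc (-τ₀) τ₀) :=
        ((continuousOn_const.add hγfst).add
          ((continuous_snd.continuousOn).smul continuousOn_const)).prodMk continuousOn_const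
      exact (hΦcont (ℓ + 1) hℓ1).comp hinner fun p hp => ⟨hmaps p hp, mem_univ _⟩
    have hevK : ∀ᶠ p in 𝓝[Icc (0:ℝ) 1 ×ˢ Icc (-τ₀) τ₀] ((0:ℝ), (0:ℝ)),
        Φ (ℓ + 1) (x + γ p.1 + p.2 • w) v ∈ K := by
      have h1 := (hψcont (0, 0) h00).tendsto
      simp only [hxpt] at h1
      exact h1 hKmem
    rw [nhdsWithin_prod_eq] at hevK
    obtain ⟨pa, hpa, pb, hpb, himp⟩ := eventually_prod_iff.mp hevK
    obtain ⟨ε₁, hε₁, hsub₁⟩ := Metric.mem_nhdsWithin_iff.mp hpa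
    obtain ⟨ε₂, hε₂, hsub₂⟩ := Metric.mem_nhdsWithin_iff.mp hpb
    set τ : ℝ := min τ₀ (ε₂/2) with hτdef
    have hτpos : 0 < τ := lt_min hτ₀pos (by positivity)
    have hττ₀ : τ ≤ τ₀ := min_le_left _ _
    have hpbτ : ∀ u : ℝ, |u| ≤ τ → pb u := by
      intro u hu
      apply hsub₂
      constructor
      · rw [Metric.mem_ball, Real.dist_eq, sub_zero]
        have : τ ≤ ε₂/2 := min_le_right _ _
        calc |u| ≤ τ := hu
          _ ≤ ε₂/2 := this
          _ < ε₂ := by linarith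
      · have := abs_le.mp (hu.trans hττ₀)
        exact ⟨this.1, this.2⟩
    -- the main estimate for fixed small s > 0
    have hmain : ∀ s : ℝ, s ∈ Ioc (0:ℝ) 1 → |s| < ε₁ → ∀ t : ℝ, t ≠ 0 → |t| ≤ τ →
        t⁻¹ • (Φ ℓ (x + γ s + t • w) v - Φ ℓ (x + γ s + (0:ℝ) • w) v) ∈ K := by
      intro s hsIoc hsε t htne ht
      have hpas : pa s := by
        apply hsub₁
        exact ⟨by rw [Metric.mem_ball, Real.dist_eq, sub_zero]; exact hsε,
          ⟨hsIoc.1.le, hsIoc.2⟩⟩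
      have hin : ∀ u : ℝ, |u| ≤ τ₀ → x + γ s + u • w ∈ U \ A := by
        intro u hu
        have := abs_le.mp (hu.trans hτ₀δ)
        exact hγ s hsIoc u ⟨this.1, this.2⟩
      have hgscont : ContinuousOn (fun u : ℝ => Φ ℓ (x + γ s + u • w) v)
          (Icc (-τ₀) τ₀) := by
        have hinner : Continuous (fun u : ℝ => ((x + γ s + u • w, v) : H × (ℕ → H))) :=
          (continuous_const.add (continuous_id.smul continuous_const)).prodMk
            continuous_const
        refine (hΦcont ℓ hℓk).comp hinner.continuousOn fun u hu => ?_
        exact ⟨hUS (hin u (abs_le.mpr ⟨hu.1, hu.2⟩)).1, mem_univ _⟩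
      have key : ∀ u : ℝ, |u| ≤ τ → ∃ L' ∈ K,
          Tendsto (fun h : ℝ => h⁻¹ • (Φ ℓ (x + γ s + (u + h) • w) v
            - Φ ℓ (x + γ s + u • w) v)) (𝓝[≠] (0:ℝ)) (𝓝 L') := by
        intro u hu
        have hyUA : x + γ s + u • w ∈ U \ A := hin u (hu.trans hττ₀)
        refine ⟨Φ (ℓ + 1) (x + γ s + u • w) v, himp hpas (hpbτ u hu), ?_⟩
        have hder := hf.deriv ℓ hℓ (x + γ s + u • w) hyUA v
        rw [← hw] at hder
        have hcy : Continuous (fun h : ℝ => x + γ s + u • w + h • w) :=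
          continuous_const.add (continuous_id.smul continuous_const)
        have hy0 : x + γ s + u • w + (0:ℝ) • w ∈ U \ A := by simpa using hyUA
        have hevUA : ∀ᶠ h : ℝ in 𝓝[≠] (0:ℝ), x + γ s + u • w + h • w ∈ U \ A :=
          (hcy.continuousAt.eventually_mem (hVopen.mem_nhds hy0)).filter_mono
            nhdsWithin_le_nhds
        have htrans : Tendsto (fun h : ℝ =>
            h⁻¹ • (Φ ℓ (x + γ s + u • w + h • w) v - Φ ℓ (x + γ s + u • w) v))
            (𝓝[≠] (0:ℝ)) (𝓝 (Φ (ℓ + 1) (x + γ s + u • w) v)) := by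
          rw [hΦagree (ℓ + 1) hℓ1 _ hyUA v]
          refine Tendsto.congr' ?_ hder
          filter_upwards [hevUA] with h hh
          rw [hΦagree ℓ hℓk _ hh, hΦagree ℓ hℓk _ hyUA]
        refine htrans.congr fun h => ?_
        rw [show x + γ s + (u + h) • w = x + γ s + u • w + h • w from by
          rw [add_smul, ← add_assoc]]
      have habs := abs_le.mp ht
      rcases htne.lt_or_gt with htneg | htpos
      · have hmvt := mvt_convex (g := fun u : ℝ => Φ ℓ (x + γ s + u • w) v)
          hKconv hKcl (a := t) (b := 0) htneg
          (hgscont.mono (Icc_subset_Icc (by linarith [hττ₀]) (by linarith [hτ₀pos])))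
          (fun u hu => key u (abs_le.mpr ⟨by linarith [hu.1], by linarith [hu.2]⟩))
        have heq : (0 - t)⁻¹ • (Φ ℓ (x + γ s + (0:ℝ) • w) v - Φ ℓ (x + γ s + t • w) v)
            = t⁻¹ • (Φ ℓ (x + γ s + t • w) v - Φ ℓ (x + γ s + (0:ℝ) • w) v) := by
          rw [zero_sub, inv_neg, neg_smul, ← smul_neg, neg_sub]
        rw [heq] at hmvt
        exact hmvt
      · have hmvt := mvt_convex (g := fun u : ℝ => Φ ℓ (x + γ s + u • w) v)
          hKconv hKcl (a := 0) (b := t) htpos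
          (hgscont.mono (Icc_subset_Icc (by linarith [hτ₀pos]) (by linarith [hττ₀])))
          (fun u hu => key u (abs_le.mpr ⟨by linarith [hu.1], by linarith [hu.2]⟩))
        rw [sub_zero] at hmvt
        exact hmvt
    -- the approximating sequence
    set σ : ℝ := min (ε₁/2) 1 with hσdef
    have hσpos : 0 < σ := lt_min (by positivity) one_pos
    set seq : ℕ → ℝ := fun n => σ * (1 / ((n : ℝ) + 1)) with hseqdef
    have hseqpos : ∀ n, 0 < seq n := fun n => by positivity
    have hseqleσ : ∀ n, seq n ≤ σ := by
      intro n
      rw [hseqdef]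
      have h1 : 1 / ((n : ℝ) + 1) ≤ 1 := by
        rw [div_le_one (by positivity)]
        simp
      calc σ * (1 / ((n : ℝ) + 1)) ≤ σ * 1 := by
            apply mul_le_mul_of_nonneg_left h1 hσpos.le
        _ = σ := mul_one σ
    have hseqle1 : ∀ n, seq n ≤ 1 := fun n => (hseqleσ n).trans (min_le_right _ _)
    have hseqε₁ : ∀ n, |seq n| < ε₁ := by
      intro n
      rw [abs_of_pos (hseqpos n)]
      calc seq n ≤ σ := hseqleσ n
        _ ≤ ε₁/2 := min_le_left _ _
        _ < ε₁ := by linarith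
    have hseq0 : Tendsto seq atTop (𝓝 0) := by
      have h0 := tendsto_one_div_add_atTop_nhds_zero_nat.const_mul σ
      rw [hseqdef]
      simpa [one_div] using h0
    -- limit along the sequence
    have hG : ∀ u : ℝ, |u| ≤ τ →
        Tendsto (fun n : ℕ => Φ ℓ (x + γ (seq n) + u • w) v) atTop
          (𝓝 (Φ ℓ (x + u • w) v)) := by
      intro u hu
      have huδ : u ∈ Icc (-δ) δ := by
        have := abs_le.mp ((hu.trans hττ₀).trans hτ₀δ)
        exact ⟨this.1, this.2⟩
      have hseqγ : Tendsto (fun n => γ (seq n)) atTop (𝓝 0) := by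
        have h1 : Tendsto seq atTop (𝓝[Icc (0:ℝ) 1] 0) :=
          tendsto_nhdsWithin_iff.mpr ⟨hseq0,
            Eventually.of_forall fun n => ⟨(hseqpos n).le, hseqle1 n⟩⟩
        have h2 := (hγc 0 ⟨le_refl 0, zero_le_one⟩).tendsto.comp h1
        simpa [hγ0, Function.comp_def] using h2
      have hbase : Tendsto (fun n : ℕ => ((x + γ (seq n) + u • w, v) : H × (ℕ → H)))
          atTop (𝓝[S ×ˢ univ] (x + u • w, v)) := by
        rw [tendsto_nhdsWithin_iff]
        constructor
        · have h3 : Tendsto (fun n : ℕ => x + γ (seq n) + u • w) atTop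
              (𝓝 (x + 0 + u • w)) :=
            (tendsto_const_nhds.add hseqγ).add tendsto_const_nhds
          have h4 : Tendsto (fun n : ℕ => ((x + γ (seq n) + u • w, v) : H × (ℕ → H)))
              atTop (𝓝 (x + 0 + u • w, v)) := h3.prodMk_nhds tendsto_const_nhds
          simpa using h4
        · refine Eventually.of_forall fun n => ⟨?_, mem_univ _⟩
          exact hUS (hγ (seq n) ⟨hseqpos n, hseqle1 n⟩ u huδ).1
      exact ((hΦcont ℓ hℓk) (x + u • w, v)
        ⟨hUS (hτ₀U u (hu.trans hττ₀)), mem_univ _⟩).tendsto.comp hbase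
    -- conclude
    have hτev : ∀ᶠ t in 𝓝 (0:ℝ), |t| ≤ τ := by
      have := Metric.eventually_nhds_iff.mpr ⟨τ, hτpos, fun {y} hy => le_of_lt (by
        rwa [Real.dist_eq, sub_zero] at hy : |y| < τ)⟩
      exact this
    filter_upwards [hτev.filter_mono nhdsWithin_le_nhds, self_mem_nhdsWithin] with t ht htne'
    have htne : t ≠ 0 := htne'
    have hmemn : ∀ n : ℕ,
        t⁻¹ • (Φ ℓ (x + γ (seq n) + t • w) v - Φ ℓ (x + γ (seq n) + (0:ℝ) • w) v) ∈ K :=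
      fun n => hmain (seq n) ⟨hseqpos n, hseqle1 n⟩ (hseqε₁ n) t htne ht
    have hlim : Tendsto (fun n : ℕ =>
        t⁻¹ • (Φ ℓ (x + γ (seq n) + t • w) v - Φ ℓ (x + γ (seq n) + (0:ℝ) • w) v))
        atTop (𝓝 (t⁻¹ • (Φ ℓ (x + t • w) v - Φ ℓ (x + (0:ℝ) • w) v))) :=
      ((hG t ht).sub (hG 0 (by simpa using hτpos.le))).const_smul t⁻¹
    have hfin : t⁻¹ • (Φ ℓ (x + t • w) v - Φ ℓ (x + (0:ℝ) • w) v) ∈ K :=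
      hKcl.mem_of_tendsto hlim (Eventually.of_forall hmemn)
    simp only [hKdef, mem_preimage] at hfin
    simpa using hfin
  · -- cont
    intro ℓ hℓ
    exact (hΦcont ℓ hℓ).mono (prod_mono hUS (subset_refl _))
end

section
/- Let ℱ be a Hausdorff locally convex space, H a Hausdorff locally convex space, E a Hausdorff locally convex space, V ⊆ E nonempty open, and f₋ ∈ C^k((−∞,0)×V, F), f₊ ∈ C^k((0,∞)×V, F). Suppose for each 0 ≤ ℓ ≤ k there is a continuous map Φ^ℓ : ℝ × V̄' × (ℝ×E)^ℓ → F (where V ⊆ V̄' ⊆ closure(V)) restricting to d^ℓf₋ on (−∞,0)×V×(ℝ×E)^ℓ and to d^ℓf₊ on (0,∞)×V×(ℝ×E)^ℓ. Then f̃ := Φ⁰|_{ℝ×V} is C^k on ℝ×V with d^ℓf̃ = Φ^ℓ|_{ℝ×V×(ℝ×E)^ℓ} for all 0 ≤ ℓ ≤ k. -/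
open Filter Topology Set

open Pointwise

set_option maxHeartbeats 1000000

namespace GlueAux

/-- clamp to `[-δ, δ]` -/
noncomputable def clamp (δ τ : ℝ) : ℝ := max (-δ) (min δ τ)

lemma clamp_abs_le {δ : ℝ} (hδ : 0 ≤ δ) (τ : ℝ) : |clamp δ τ| ≤ δ := by
  rw [abs_le]
  exact ⟨le_max_left _ _, max_le (by linarith) (min_le_left _ _)⟩

lemma clamp_eq {δ τ : ℝ} (h : |τ| ≤ δ) : clamp δ τ = τ := by
  rw [abs_le] at h
  rw [clamp, min_eq_right h.2, max_eq_right h.1]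

lemma continuous_clamp (δ : ℝ) : Continuous (clamp δ) :=
  continuous_const.max (continuous_const.min continuous_id)

lemma mul_mem_uIcc' {s a τ : ℝ} (hτ : τ ∈ uIcc 0 s) : τ * a ∈ uIcc 0 (s * a) := by
  rw [Set.mem_uIcc] at hτ ⊢
  rcases le_total 0 a with ha | ha
  · rcases hτ with ⟨h1, h2⟩ | ⟨h1, h2⟩
    · exact Or.inl ⟨by nlinarith, by nlinarith⟩
    · exact Or.inr ⟨by nlinarith, by nlinarith⟩
  · rcases hτ with ⟨h1, h2⟩ | ⟨h1, h2⟩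
    · exact Or.inr ⟨by nlinarith, by nlinarith⟩
    · exact Or.inl ⟨by nlinarith, by nlinarith⟩

section Vec

variable {E F : Type*} [AddCommGroup E] [Module ℝ E] [TopologicalSpace E]
  [IsTopologicalAddGroup E] [ContinuousSMul ℝ E]
  [AddCommGroup F] [Module ℝ F] [TopologicalSpace F] [IsTopologicalAddGroup F]
  [ContinuousSMul ℝ F]

lemma hasDirDeriv_congr {U : Set E} (hU : IsOpen U) {f g : E → F} {x v : E} {L : F}
    (hx : x ∈ U) (hfg : ∀ y ∈ U, f y = g y) (h : HasDirDeriv g x v L) :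
    HasDirDeriv f x v L := by
  have hco : Continuous fun t : ℝ => x + t • v :=
    continuous_const.add (continuous_id.smul continuous_const)
  have hmem : ∀ᶠ t in 𝓝 (0 : ℝ), x + t • v ∈ U :=
    hco.continuousAt.preimage_mem_nhds (by simpa using hU.mem_nhds hx)
  refine h.congr' ?_
  filter_upwards [hmem.filter_mono nhdsWithin_le_nhds] with t ht
  rw [hfg _ ht, hfg _ hx]

lemma hasDerivAt_of_hasDirDeriv {f : E → F} {x u : E} {L : F} {s₀ : ℝ}
    (h : HasDirDeriv f (x + s₀ • u) u L) (lam : F →L[ℝ] ℝ) :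
    HasDerivAt (fun s : ℝ => lam (f (x + s • u))) (lam L) s₀ := by
  rw [hasDerivAt_iff_tendsto_slope]
  have h1 : Tendsto (fun y : ℝ => y - s₀) (𝓝[≠] s₀) (𝓝[≠] (0 : ℝ)) := by
    rw [tendsto_nhdsWithin_iff]
    constructor
    · refine Filter.Tendsto.mono_left ?_ nhdsWithin_le_nhds
      simpa using (continuous_sub_right s₀).tendsto s₀
    · filter_upwards [eventually_mem_nhdsWithin] with y hy
      exact sub_ne_zero.2 hy
  have h2 : Tendsto (fun t : ℝ =>
      t⁻¹ * (lam (f (x + (s₀ + t) • u)) - lam (f (x + s₀ • u))))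
      (𝓝[≠] (0 : ℝ)) (𝓝 (lam L)) := by
    have h3 := (lam.continuous.tendsto L).comp h
    refine h3.congr fun t => ?_
    have harg : x + s₀ • u + t • u = x + (s₀ + t) • u := by
      rw [add_smul, add_assoc]
    simp only [Function.comp_apply, ← harg, map_smul, map_sub, smul_eq_mul]
  have h4 := h2.comp h1
  refine h4.congr fun y => ?_
  have hy : s₀ + (y - s₀) = y := by ring
  simp only [Function.comp_apply, hy]
  rw [slope_def_field, div_eq_inv_mul]

end Vec

lemma avg_le {φ : ℝ → ℝ} {s u : ℝ} (hs : s ≠ 0)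
    (hφ : IntervalIntegrable φ MeasureTheory.volume 0 s)
    (hb : ∀ τ ∈ uIcc 0 s, φ τ ≤ u) :
    s⁻¹ * ∫ τ in (0 : ℝ)..s, φ τ ≤ u := by
  rcases hs.lt_or_gt with h | h
  · have h1 : ∫ τ in s..(0:ℝ), φ τ ≤ ∫ τ in s..(0:ℝ), u :=
      intervalIntegral.integral_mono_on h.le hφ.symm intervalIntegrable_const
        (fun x hx => hb x (by rw [uIcc_of_ge h.le]; exact hx))
    have h2 : (∫ τ in s..(0:ℝ), (u:ℝ)) = (0 - s) * u := by
      simp [intervalIntegral.integral_const, smul_eq_mul]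
    have h3 : (∫ τ in (0:ℝ)..s, φ τ) = -∫ τ in s..(0:ℝ), φ τ :=
      intervalIntegral.integral_symm s 0
    rw [h3, inv_mul_eq_div, div_le_iff_of_neg h]
    nlinarith
  · have h1 : ∫ τ in (0:ℝ)..s, φ τ ≤ ∫ τ in (0:ℝ)..s, u :=
      intervalIntegral.integral_mono_on h.le hφ intervalIntegrable_const
        (fun x hx => hb x (by rw [uIcc_of_le h.le]; exact hx))
    have h2 : (∫ τ in (0:ℝ)..s, (u:ℝ)) = (s - 0) * u := by
      simp [intervalIntegral.integral_const, smul_eq_mul]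
    rw [inv_mul_eq_div, div_le_iff₀ h]
    nlinarith

section LCS

variable {F : Type*} [AddCommGroup F] [Module ℝ F] [TopologicalSpace F]
  [IsTopologicalAddGroup F] [ContinuousSMul ℝ F] [LocallyConvexSpace ℝ F]

lemma closure_subset_add {s V : Set F} (hV : V ∈ 𝓝 (0 : F)) : closure s ⊆ s + V := by
  intro x hx
  have h1 : (fun y : F => x - y) ⁻¹' V ∈ 𝓝 x := by
    have hc : Continuous fun y : F => x - y := continuous_const.sub continuous_id
    exact hc.continuousAt.preimage_mem_nhds (by simpa using hV)
  obtain ⟨w, hw⟩ := mem_closure_iff_nhds.1 hx _ h1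
  rw [Set.mem_add]
  exact ⟨w, hw.2, x - w, hw.1, by abel⟩

lemma tendsto_of_weak_integral {g c : ℝ → F} {δ : ℝ} (hδ : 0 < δ)
    (hc : ContinuousOn c (Icc (-δ) δ))
    (hweak : ∀ lam : F →L[ℝ] ℝ, ∀ s ∈ Icc (-δ) δ,
      lam (g s) - lam (g 0) = ∫ τ in (0:ℝ)..s, lam (c τ)) :
    Tendsto (fun s : ℝ => s⁻¹ • (g s - g 0)) (𝓝[≠] (0:ℝ)) (𝓝 (c 0)) := by
  have key : Tendsto (fun s : ℝ => s⁻¹ • (g s - g 0) - c 0) (𝓝[≠] (0:ℝ)) (𝓝 (0:F)) := by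
    rw [Filter.tendsto_def]
    intro N hN
    show ∀ᶠ s in 𝓝[≠] (0:ℝ), (s⁻¹ • (g s - g 0) - c 0) ∈ N
    obtain ⟨V, hVmem, hVN⟩ := exists_nhds_zero_half hN
    obtain ⟨W, ⟨hW, hWconv⟩, hWV⟩ :=
      (LocallyConvexSpace.convex_basis (𝕜 := ℝ) (0:F)).mem_iff.1 hVmem
    have hCN : closure W ⊆ N := by
      intro z hz
      obtain ⟨w, hw, v', hv', hsum⟩ := closure_subset_add hVmem hz
      rw [← hsum]; exact hVN w (hWV hw) v' hv'
    have hc0 : Tendsto (fun τ : ℝ => c τ - c 0) (𝓝 (0:ℝ)) (𝓝 (0:F)) := by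
      have h := (hc.continuousAt (Icc_mem_nhds (by linarith) hδ)).sub_const (c 0)
      simpa using h
    have hWev : {τ : ℝ | c τ - c 0 ∈ W} ∈ 𝓝 (0:ℝ) := hc0 hW
    obtain ⟨ε, hε, hball⟩ := Metric.mem_nhds_iff.1 hWev
    set δ₂ := min (ε/2) δ with hδ₂def
    have hδ₂ : 0 < δ₂ := lt_min (by linarith) hδ
    have hev2 : ∀ᶠ s in 𝓝 (0:ℝ), |s| < δ₂ := by
      filter_upwards [Metric.ball_mem_nhds (0:ℝ) hδ₂] with s hsb
      simpa [Real.dist_eq] using hsb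
    filter_upwards [hev2.filter_mono nhdsWithin_le_nhds, eventually_mem_nhdsWithin]
      with s hsabs hs0
    have hs0' : (s:ℝ) ≠ 0 := hs0
    have habs := abs_lt.1 hsabs
    have hδ₂δ : δ₂ ≤ δ := min_le_right _ _
    have hδ₂ε : δ₂ ≤ ε/2 := min_le_left _ _
    have hsδ : s ∈ Icc (-δ) δ := ⟨by linarith, by linarith⟩
    have huIcc : uIcc 0 s ⊆ Icc (-δ) δ := by
      intro τ hτ
      rw [Set.mem_uIcc] at hτ
      rcases hτ with ⟨h1, h2⟩ | ⟨h1, h2⟩ <;> exact ⟨by linarith, by linarith⟩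
    suffices hsC : s⁻¹ • (g s - g 0) - c 0 ∈ closure W from hCN hsC
    by_contra hyc
    obtain ⟨lam, u, hu1, hu2⟩ :=
      geometric_hahn_banach_closed_point hWconv.closure isClosed_closure hyc
    have hint : IntervalIntegrable (fun τ => lam (c τ)) MeasureTheory.volume 0 s :=
      (lam.continuous.comp_continuousOn (hc.mono huIcc)).intervalIntegrable
    have hval : lam (s⁻¹ • (g s - g 0) - c 0)
        = s⁻¹ * ∫ τ in (0:ℝ)..s, (lam (c τ) - lam (c 0)) := by
      rw [map_sub, map_smul, smul_eq_mul, map_sub, hweak lam s hsδ,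
        intervalIntegral.integral_sub hint intervalIntegrable_const,
        intervalIntegral.integral_const, smul_eq_mul]
      field_simp
      ring
    have hbound : s⁻¹ * (∫ τ in (0:ℝ)..s, (lam (c τ) - lam (c 0))) ≤ u := by
      apply avg_le hs0' (hint.sub intervalIntegrable_const)
      intro τ hτ
      have hτW : c τ - c 0 ∈ W := by
        apply hball
        rw [Metric.mem_ball, Real.dist_eq, sub_zero]
        rw [Set.mem_uIcc] at hτ
        rw [abs_lt]
        rcases hτ with ⟨h3, h4⟩ | ⟨h3, h4⟩ <;> constructor <;> linarith
      calc lam (c τ) - lam (c 0) = lam (c τ - c 0) := by rw [map_sub]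
        _ ≤ u := (hu1 _ (subset_closure hτW)).le
    rw [hval] at hu2
    linarith
  have h2 := key.add (tendsto_const_nhds (x := c 0))
  simpa using h2
end LCS

end GlueAux


/-- Gluing corollary: let `V ⊆ E` be open nonempty, `V ⊆ V' ⊆ closure V`, and let
`f₋ ∈ C^k((−∞,0)×V, F)`, `f₊ ∈ C^k((0,∞)×V, F)` (Bastiani, with differential families
`Dm`, `Dp`). If for each `0 ≤ ℓ ≤ k` there is a continuous `Φ ℓ : ℝ × V' × (ℝ×E)^ℓ → F`
restricting to `d^ℓ f₋` on `(−∞,0)×V` and to `d^ℓ f₊` on `(0,∞)×V`, then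
`f̃ := Φ⁰|_{ℝ×V}` is `C^k` on `ℝ×V` with `d^ℓ f̃ = Φ ℓ` there for all `0 ≤ ℓ ≤ k`. -/
theorem glue_across_hyperplane
    {E F : Type*}
    [AddCommGroup E] [Module ℝ E] [TopologicalSpace E] [IsTopologicalAddGroup E]
    [ContinuousSMul ℝ E] [LocallyConvexSpace ℝ E] [T2Space E]
    [AddCommGroup F] [Module ℝ F] [TopologicalSpace F] [IsTopologicalAddGroup F]
    [ContinuousSMul ℝ F] [LocallyConvexSpace ℝ F] [T2Space F]
    (k : ℕ∞) {V V' : Set E} (hV : IsOpen V) (hVne : V.Nonempty)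
    (hVV' : V ⊆ V') (hV'cl : V' ⊆ closure V)
    (fm fp : ℝ × E → F)
    (Dm Dp : ℕ → (ℝ × E) → (ℕ → ℝ × E) → F)
    (hfm : BastianiFamily k (Iio (0:ℝ) ×ˢ V) fm Dm)
    (hfp : BastianiFamily k (Ioi (0:ℝ) ×ˢ V) fp Dp)
    (Φ : ℕ → (ℝ × E) → (ℕ → ℝ × E) → F)
    (hΦcont : ∀ ℓ : ℕ, (ℓ : ℕ∞) ≤ k →
      ContinuousOn (fun p : (ℝ × E) × (ℕ → ℝ × E) => Φ ℓ p.1 p.2)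
        (((univ : Set ℝ) ×ˢ V') ×ˢ univ))
    (hΦm : ∀ ℓ : ℕ, (ℓ : ℕ∞) ≤ k → ∀ z ∈ Iio (0:ℝ) ×ˢ V, ∀ w, Φ ℓ z w = Dm ℓ z w)
    (hΦp : ∀ ℓ : ℕ, (ℓ : ℕ∞) ≤ k → ∀ z ∈ Ioi (0:ℝ) ×ˢ V, ∀ w, Φ ℓ z w = Dp ℓ z w)
    (hΦ0 : ∀ z w, Φ 0 z w = Φ 0 z 0) :
    BastianiFamily k ((univ : Set ℝ) ×ˢ V) (fun z => Φ 0 z 0) Φ := by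

  classical
  constructor
  · exact fun x w => hΦ0 x w
  case cont =>
    intro ℓ hℓ
    exact (hΦcont ℓ hℓ).mono (Set.prod_mono (Set.prod_mono subset_rfl hVV') subset_rfl)
  case deriv =>
    intro ℓ hℓ x hx v
    have hℓk : (ℓ : ℕ∞) ≤ k := hℓ.le
    have hℓ1k : ((ℓ + 1 : ℕ) : ℕ∞) ≤ k := by
      have h := Order.add_one_le_of_lt hℓ
      push_cast
      exact h
    have keym : ∀ z ∈ Iio (0:ℝ) ×ˢ V,
        HasDirDeriv (fun y => Φ ℓ y v) z (v ℓ) (Φ (ℓ+1) z v) := by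
      intro z hz
      rw [hΦm (ℓ+1) hℓ1k z hz v]
      exact GlueAux.hasDirDeriv_congr (isOpen_Iio.prod hV) hz
        (fun y hy => hΦm ℓ hℓk y hy v) (hfm.deriv ℓ hℓ z hz v)
    have keyp : ∀ z ∈ Ioi (0:ℝ) ×ˢ V,
        HasDirDeriv (fun y => Φ ℓ y v) z (v ℓ) (Φ (ℓ+1) z v) := by
      intro z hz
      rw [hΦp (ℓ+1) hℓ1k z hz v]
      exact GlueAux.hasDirDeriv_congr (isOpen_Ioi.prod hV) hz
        (fun y hy => hΦp ℓ hℓk y hy v) (hfp.deriv ℓ hℓ z hz v)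
    obtain ⟨t₀, e⟩ := x
    have he : e ∈ V := hx.2
    rcases lt_trichotomy t₀ 0 with ht | ht | ht
    · exact keym (t₀, e) ⟨ht, he⟩
    · subst ht
      -- the hyperplane case
      obtain ⟨δ, hδpos, hδ⟩ : ∃ δ : ℝ, 0 < δ ∧ ∀ τ : ℝ, |τ| ≤ δ → e + τ • (v ℓ).2 ∈ V := by
        have hco : Continuous fun τ : ℝ => e + τ • (v ℓ).2 :=
          continuous_const.add (continuous_id.smul continuous_const)
        have h1 : (fun τ : ℝ => e + τ • (v ℓ).2) ⁻¹' V ∈ 𝓝 (0:ℝ) :=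
          hco.continuousAt.preimage_mem_nhds (by simpa using hV.mem_nhds he)
        obtain ⟨ε, hε, hball⟩ := Metric.mem_nhds_iff.1 h1
        refine ⟨ε/2, by linarith, fun τ hτ => hball ?_⟩
        rw [Metric.mem_ball, Real.dist_eq, sub_zero]
        linarith [abs_nonneg τ]
      have hsnd : ∀ (r τ : ℝ), (((r, e) : ℝ × E) + τ • v ℓ).2 = e + τ • (v ℓ).2 := by
        intro r τ; simp
      have hfst : ∀ (r τ : ℝ), (((r, e) : ℝ × E) + τ • v ℓ).1 = r + τ * (v ℓ).1 := by
        intro r τ; simp [smul_eq_mul]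
      -- continuity of the parameter maps
      have hcontOn : ∀ m : ℕ, (m : ℕ∞) ≤ k → ∀ r : ℝ,
          ContinuousOn (fun τ : ℝ => Φ m (((r, e) : ℝ × E) + τ • v ℓ) v) (Icc (-δ) δ) := by
        intro m hm r
        have hin : Continuous fun τ : ℝ => ((((r, e) : ℝ × E) + τ • v ℓ), v) :=
          (continuous_const.add (continuous_id.smul continuous_const)).prodMk
            continuous_const
        refine (hΦcont m hm).comp hin.continuousOn ?_
        intro τ hτ
        refine ⟨⟨trivial, hVV' ?_⟩, trivial⟩
        rw [hsnd r τ]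
        exact hδ τ (abs_le.2 ⟨hτ.1, hτ.2⟩)
      have hccont : ContinuousOn
          (fun τ : ℝ => Φ (ℓ+1) ((((0:ℝ), e) : ℝ × E) + τ • v ℓ) v) (Icc (-δ) δ) :=
        hcontOn (ℓ+1) hℓ1k 0
      -- the weak fundamental-theorem identity
      have hweak : ∀ lam : F →L[ℝ] ℝ, ∀ s ∈ Icc (-δ) δ,
          lam ((fun s : ℝ => Φ ℓ ((((0:ℝ), e) : ℝ × E) + s • v ℓ) v) s)
            - lam ((fun s : ℝ => Φ ℓ ((((0:ℝ), e) : ℝ × E) + s • v ℓ) v) 0)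
          = ∫ τ in (0:ℝ)..s,
              lam ((fun τ : ℝ => Φ (ℓ+1) ((((0:ℝ), e) : ℝ × E) + τ • v ℓ) v) τ) := by
        intro lam s hs
        by_cases hs0 : s = 0
        · subst hs0; simp
        · have hτabs : ∀ τ ∈ uIcc 0 s, |τ| ≤ δ := by
            intro τ hτ
            rw [Set.mem_uIcc] at hτ
            rw [abs_le]
            rcases hτ with ⟨h1, h2⟩ | ⟨h1, h2⟩ <;>
              exact ⟨by linarith [hs.1, hs.2], by linarith [hs.1, hs.2]⟩
          set a : ℝ := (v ℓ).1 with ha_def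
          set σ : ℝ := if 0 ≤ s * a then 1 else -1 with hσdef
          have hσsq : σ * σ = 1 := by
            rw [hσdef]; split_ifs <;> norm_num
          have hστ : ∀ τ ∈ uIcc 0 s, 0 ≤ σ * (τ * a) := by
            intro τ hτ
            have hm := GlueAux.mul_mem_uIcc' (a := a) hτ
            rw [hσdef]
            split_ifs with hsa'
            · rw [uIcc_of_le hsa', Set.mem_Icc] at hm
              linarith [hm.1]
            · push_neg at hsa'
              rw [uIcc_of_ge hsa'.le, Set.mem_Icc] at hm
              linarith [hm.2]
          -- FTC for the shifted paths
          have hFTC : ∀ n : ℕ,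
              (∫ τ in (0:ℝ)..s, lam (Φ (ℓ+1) (((σ/((n:ℝ)+1), e) : ℝ × E) + τ • v ℓ) v))
              = lam (Φ ℓ (((σ/((n:ℝ)+1), e) : ℝ × E) + s • v ℓ) v)
                - lam (Φ ℓ (((σ/((n:ℝ)+1), e) : ℝ × E) + (0:ℝ) • v ℓ) v) := by
            intro n
            have hn1 : (0:ℝ) < (n:ℝ) + 1 := by positivity
            have hrpos : 0 < σ * (σ / ((n:ℝ)+1)) := by
              rw [← mul_div_assoc, hσsq]; positivity
            have hderivn : ∀ τ ∈ uIcc 0 s,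
                HasDerivAt
                  (fun τ' : ℝ => lam (Φ ℓ (((σ/((n:ℝ)+1), e) : ℝ × E) + τ' • v ℓ) v))
                  (lam (Φ (ℓ+1) (((σ/((n:ℝ)+1), e) : ℝ × E) + τ • v ℓ) v)) τ := by
              intro τ hτ
              have hz2 : (((σ/((n:ℝ)+1), e) : ℝ × E) + τ • v ℓ).2 ∈ V := by
                rw [hsnd]; exact hδ τ (hτabs τ hτ)
              have hz1 : 0 < σ * ((((σ/((n:ℝ)+1), e) : ℝ × E) + τ • v ℓ).1) := by
                rw [hfst, mul_add]
                exact add_pos_of_pos_of_nonneg hrpos (hστ τ hτ)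
              have hzne : (((σ/((n:ℝ)+1), e) : ℝ × E) + τ • v ℓ).1 ≠ 0 := by
                intro h0
                rw [h0, mul_zero] at hz1
                exact lt_irrefl 0 hz1
              rcases hzne.lt_or_gt with hneg | hpos
              · exact GlueAux.hasDerivAt_of_hasDirDeriv (keym _ ⟨hneg, hz2⟩) lam
              · exact GlueAux.hasDerivAt_of_hasDirDeriv (keyp _ ⟨hpos, hz2⟩) lam
            apply intervalIntegral.integral_eq_sub_of_hasDerivAt hderivn
            refine ContinuousOn.intervalIntegrable ?_
            refine lam.continuous.comp_continuousOn ?_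
            exact (hcontOn (ℓ+1) hℓ1k (σ/((n:ℝ)+1))).mono
              (fun τ hτ => abs_le.1 (hτabs τ hτ))
          -- limits as n → ∞
          have hrtend : Tendsto (fun n : ℕ => σ / ((n:ℝ)+1)) atTop (𝓝 0) := by
            have h := tendsto_one_div_add_atTop_nhds_zero_nat.const_mul σ
            simpa [div_eq_mul_inv] using h
          have hThe : ∀ m : ℕ, (m : ℕ∞) ≤ k → ∀ τ₀ : ℝ, |τ₀| ≤ δ →
              Tendsto (fun n : ℕ => lam (Φ m (((σ/((n:ℝ)+1), e) : ℝ × E) + τ₀ • v ℓ) v))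
                atTop (𝓝 (lam (Φ m ((((0:ℝ), e) : ℝ × E) + τ₀ • v ℓ) v))) := by
            intro m hm τ₀ hτ₀
            have hz2V : ((((0:ℝ), e) : ℝ × E) + τ₀ • v ℓ).2 ∈ V := by
              rw [hsnd]; exact hδ τ₀ hτ₀
            have hmemN : (((univ : Set ℝ) ×ˢ V') ×ˢ (univ : Set (ℕ → ℝ × E))) ∈
                𝓝 (((((0:ℝ), e) : ℝ × E) + τ₀ • v ℓ, v)) := by
              refine prod_mem_nhds ?_ univ_mem
              have : ((univ : Set ℝ) ×ˢ V') ∈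
                  𝓝 ((((((0:ℝ), e) : ℝ × E) + τ₀ • v ℓ).1,
                      ((((0:ℝ), e) : ℝ × E) + τ₀ • v ℓ).2)) :=
                prod_mem_nhds univ_mem (mem_of_superset (hV.mem_nhds hz2V) hVV')
              exact this
            have hcA := (hΦcont m hm).continuousAt hmemN
            have hmap : Continuous fun r : ℝ => ((((r, e) : ℝ × E) + τ₀ • v ℓ), v) :=
              (((continuous_id.prodMk continuous_const).add
                continuous_const).prodMk continuous_const)
            have h1 := hmap.tendsto 0
            have hcomp := Filter.Tendsto.comp (Filter.Tendsto.comp hcA h1) hrtend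
            exact ((lam.continuous.tendsto _).comp hcomp)
          -- parametric-integral limit
          have hτδ' : (0:ℝ) ≤ δ := hδpos.le
          have hHcont : Continuous (Function.uncurry fun (r : ℝ) (τ : ℝ) =>
              lam (Φ (ℓ+1) (((r, e) : ℝ × E) + (GlueAux.clamp δ τ) • v ℓ) v)) := by
            have hinner : Continuous fun p : ℝ × ℝ =>
                ((((p.1, e) : ℝ × E) + (GlueAux.clamp δ p.2) • v ℓ), v) :=
              (((continuous_fst.prodMk continuous_const).add
                (((GlueAux.continuous_clamp δ).comp continuous_snd).smul
                  continuous_const)).prodMk continuous_const)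
            have hmemS : ∀ p : ℝ × ℝ,
                ((((p.1, e) : ℝ × E) + (GlueAux.clamp δ p.2) • v ℓ), v) ∈
                  (((univ : Set ℝ) ×ˢ V') ×ˢ (univ : Set (ℕ → ℝ × E))) := by
              intro p
              refine ⟨⟨trivial, hVV' ?_⟩, trivial⟩
              rw [hsnd]
              exact hδ _ (GlueAux.clamp_abs_le hτδ' p.2)
            have hmid : Continuous fun p : ℝ × ℝ =>
                Φ (ℓ+1) (((p.1, e) : ℝ × E) + (GlueAux.clamp δ p.2) • v ℓ) v :=
              (hΦcont (ℓ+1) hℓ1k).comp_continuous hinner hmemS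
            exact lam.continuous.comp hmid
          have hIlim : Tendsto (fun n : ℕ => ∫ τ in (0:ℝ)..s,
              lam (Φ (ℓ+1) (((σ/((n:ℝ)+1), e) : ℝ × E) + (GlueAux.clamp δ τ) • v ℓ) v))
              atTop (𝓝 (∫ τ in (0:ℝ)..s,
                lam (Φ (ℓ+1) ((((0:ℝ), e) : ℝ × E) + (GlueAux.clamp δ τ) • v ℓ) v))) := by
            have hparam := intervalIntegral.continuous_parametric_intervalIntegral_of_continuous'
              (μ := MeasureTheory.volume)
              (f := fun (r : ℝ) (τ : ℝ) =>
                lam (Φ (ℓ+1) (((r, e) : ℝ × E) + (GlueAux.clamp δ τ) • v ℓ) v))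
              hHcont 0 s
            exact (hparam.continuousAt).tendsto.comp hrtend
          have hclcongr : ∀ r : ℝ,
              (∫ τ in (0:ℝ)..s,
                lam (Φ (ℓ+1) (((r, e) : ℝ × E) + (GlueAux.clamp δ τ) • v ℓ) v))
              = ∫ τ in (0:ℝ)..s, lam (Φ (ℓ+1) (((r, e) : ℝ × E) + τ • v ℓ) v) := by
            intro r
            apply intervalIntegral.integral_congr
            intro τ hτ
            simp only [GlueAux.clamp_eq (hτabs τ hτ)]
          have hAlim : Tendsto (fun n : ℕ => ∫ τ in (0:ℝ)..s,
              lam (Φ (ℓ+1) (((σ/((n:ℝ)+1), e) : ℝ × E) + τ • v ℓ) v)) atTop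
              (𝓝 (∫ τ in (0:ℝ)..s, lam (Φ (ℓ+1) ((((0:ℝ), e) : ℝ × E) + τ • v ℓ) v))) := by
            rw [← hclcongr 0]
            exact hIlim.congr (fun n => hclcongr _)
          have hGlim : Tendsto (fun n : ℕ => ∫ τ in (0:ℝ)..s,
              lam (Φ (ℓ+1) (((σ/((n:ℝ)+1), e) : ℝ × E) + τ • v ℓ) v)) atTop
              (𝓝 (lam (Φ ℓ ((((0:ℝ), e) : ℝ × E) + s • v ℓ) v)
                - lam (Φ ℓ ((((0:ℝ), e) : ℝ × E) + (0:ℝ) • v ℓ) v))) := by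
            have hL := (hThe ℓ hℓk s (abs_le.2 ⟨hs.1, hs.2⟩)).sub
              (hThe ℓ hℓk 0 (by simpa using hδpos.le))
            exact hL.congr (fun n => (hFTC n).symm)
          exact (tendsto_nhds_unique hGlim hAlim)
      have main := GlueAux.tendsto_of_weak_integral
        (g := fun s : ℝ => Φ ℓ ((((0:ℝ), e) : ℝ × E) + s • v ℓ) v)
        (c := fun τ : ℝ => Φ (ℓ+1) ((((0:ℝ), e) : ℝ × E) + τ • v ℓ) v)
        hδpos hccont hweak
      show Tendsto (fun t : ℝ => t⁻¹ • (Φ ℓ ((((0:ℝ), e) : ℝ × E) + t • v ℓ) v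
          - Φ ℓ (((0:ℝ), e) : ℝ × E) v)) (𝓝[≠] (0:ℝ)) (𝓝 (Φ (ℓ+1) (((0:ℝ), e) : ℝ × E) v))
      have h00 : ((((0:ℝ), e) : ℝ × E) + (0:ℝ) • v ℓ) = (((0:ℝ), e) : ℝ × E) := by simp
      simp only [h00] at main
      exact main
    · exact keyp (t₀, e) ⟨ht, he⟩
end

section
/- Let E, F be Hausdorff locally convex spaces, (V, V̄) with V ⊆ E nonempty open and V ⊆ V̄ ⊆ closure(V), −∞ ≤ a < c < d ≤ b < ∞, k ≥ 1, and f a Bastiani C^k map on (a,b)×V whose ℓ-th differentials extend continuously to maps ext^ℓf : (a,b]×V̄×(ℝ×E)^ℓ → F. Then for each continuous seminorm p on F, each 1 ≤ ℓ ≤ k, and each compact K ⊆ V̄, there exist C ≥ 1, a continuous seminorm q on E, and an open U ⊇ K in E such that p(ext^ℓf(z; w₁,…,w_ℓ)) ≤ C·∏_{i=1}^ℓ max(|λᵢ|, q(Xᵢ)) for all z ∈ [c,d]×(U ∩ V̄) and wᵢ = (λᵢ, Xᵢ) ∈ ℝ×E. -/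
open Filter Topology Set

lemma exists_seminorm_nhds' {E : Type*} [AddCommGroup E] [Module ℝ E] [TopologicalSpace E]
    [IsTopologicalAddGroup E] [ContinuousSMul ℝ E] [LocallyConvexSpace ℝ E]
    {s : Set E} (hs : s ∈ 𝓝 (0:E)) :
    ∃ q : Seminorm ℝ E, Continuous q ∧ ∃ ε : ℝ, 0 < ε ∧ {x | q x < ε} ⊆ s := by
  have hws := with_gaugeSeminormFamily (𝕜 := ℝ) (E := E)
  rcases hws.hasBasis_zero_ball.mem_iff.1 hs with ⟨⟨I, r⟩, hr, hball⟩
  refine ⟨I.sup (gaugeSeminormFamily ℝ E), Seminorm.continuous (r := r)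
    (hws.hasBasis_zero_ball.mem_of_mem hr), r, hr, ?_⟩
  intro x hx
  exact hball (by simpa [Seminorm.mem_ball_zero] using hx)

lemma eqOn_of_dense' {X F : Type*} [TopologicalSpace X] [TopologicalSpace F] [T2Space F]
    {s t : Set X} (hst : s ⊆ t) {g₁ g₂ : X → F}
    (h₁ : ContinuousOn g₁ t) (h₂ : ContinuousOn g₂ t)
    (heq : ∀ z ∈ s, g₁ z = g₂ z) {z : X} (hz : z ∈ t) (hcl : z ∈ closure s) :
    g₁ z = g₂ z := by
  have hne : (𝓝[s] z).NeBot := mem_closure_iff_nhdsWithin_neBot.1 hcl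
  have t₁ : Tendsto g₁ (𝓝[s] z) (𝓝 (g₁ z)) := (h₁ z hz).mono hst
  have t₂ : Tendsto g₂ (𝓝[s] z) (𝓝 (g₂ z)) := (h₂ z hz).mono hst
  have he : g₁ =ᶠ[𝓝[s] z] g₂ := by
    filter_upwards [self_mem_nhdsWithin] with y hy using heq y hy
  exact tendsto_nhds_unique (t₁.congr' he) t₂

set_option maxHeartbeats 1600000 in
/-- Uniform product estimate for extended differentials: let `−∞ ≤ a < c < d ≤ b < ∞`,
`V ⊆ E` open nonempty, `V ⊆ V' ⊆ closure V`, and `f` Bastiani `C^k` on `(a,b) × V` with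
continuous extensions `Φ ℓ` of `d^ℓ f` to `(a,b] × V'`. Then for every continuous seminorm
`p` on `F`, every `1 ≤ ℓ ≤ k` and compact `K ⊆ V'`, there are `C ≥ 1`, a continuous
seminorm `q` on `E` and an open `U ⊇ K` such that
`p(Φ ℓ (z; w₁,…,w_ℓ)) ≤ C · ∏ᵢ max(|λᵢ|, q(Xᵢ))` for all `z ∈ [c,d] × (U ∩ V')` and
`wᵢ = (λᵢ, Xᵢ) ∈ ℝ × E`. -/
theorem extended_differential_product_bound
    {E F : Type*}
    [AddCommGroup E] [Module ℝ E] [TopologicalSpace E] [IsTopologicalAddGroup E]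
    [ContinuousSMul ℝ E] [LocallyConvexSpace ℝ E] [T2Space E]
    [AddCommGroup F] [Module ℝ F] [TopologicalSpace F] [IsTopologicalAddGroup F]
    [ContinuousSMul ℝ F] [LocallyConvexSpace ℝ F] [T2Space F]
    (k : ℕ∞) {V V' : Set E} (hV : IsOpen V) (hVne : V.Nonempty)
    (hVV' : V ⊆ V') (hV'cl : V' ⊆ closure V)
    (a : EReal) (b c d : ℝ) (hac : a < (c : EReal)) (hcd : c < d) (hdb : d ≤ b)
    (f : ℝ × E → F) (Df : ℕ → (ℝ × E) → (ℕ → ℝ × E) → F)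
    (hf : BastianiFamily k ({t : ℝ | a < (t : EReal) ∧ t < b} ×ˢ V) f Df)
    (Φ : ℕ → (ℝ × E) → (ℕ → ℝ × E) → F)
    (hΦcont : ∀ ℓ : ℕ, (ℓ : ℕ∞) ≤ k →
      ContinuousOn (fun p : (ℝ × E) × (ℕ → ℝ × E) => Φ ℓ p.1 p.2)
        (({t : ℝ | a < (t : EReal) ∧ t ≤ b} ×ˢ V') ×ˢ univ))
    (hΦ : ∀ ℓ : ℕ, (ℓ : ℕ∞) ≤ k →
      ∀ z ∈ {t : ℝ | a < (t : EReal) ∧ t < b} ×ˢ V, ∀ w, Φ ℓ z w = Df ℓ z w)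
    (p : Seminorm ℝ F) (hp : Continuous p)
    (ℓ : ℕ) (hℓ : 1 ≤ ℓ) (hℓk : (ℓ : ℕ∞) ≤ k)
    (K : Set E) (hK : IsCompact K) (hKV' : K ⊆ V') :
    ∃ C : ℝ, 1 ≤ C ∧ ∃ q : Seminorm ℝ E, Continuous q ∧ ∃ U : Set E, IsOpen U ∧ K ⊆ U ∧
      ∀ t ∈ Icc c d, ∀ x ∈ U ∩ V', ∀ w : ℕ → ℝ × E,
        p (Φ ℓ (t, x) w) ≤ C * ∏ i ∈ Finset.range ℓ, max |(w i).1| (q (w i).2) := by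
  classical
  set S : Set ℝ := {t : ℝ | a < (t : EReal) ∧ t < b} with hSdef
  set T : Set ℝ := {t : ℝ | a < (t : EReal) ∧ t ≤ b} with hTdef
  have hcb : c < b := hcd.trans_le hdb
  have hST : S ⊆ T := fun t ht => ⟨ht.1, ht.2.le⟩
  have hIccT : Icc c d ⊆ T := fun t ht =>
    ⟨hac.trans_le (by exact_mod_cast ht.1), ht.2.trans hdb⟩
  have hTclS : T ⊆ closure S := by
    intro t ht
    rcases lt_or_eq_of_le ht.2 with h | h
    · exact subset_closure ⟨ht.1, h⟩
    · have hsub : Ioo c t ⊆ S := fun r hr =>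
        ⟨hac.trans (by exact_mod_cast hr.1), h ▸ hr.2⟩
      have hct : c < t := h ▸ hcb
      have : t ∈ closure (Ioo c t) := by
        rw [closure_Ioo hct.ne]
        exact ⟨hct.le, le_rfl⟩
      exact closure_mono hsub this
  have hSVopen : IsOpen (S ×ˢ V) := by
    refine IsOpen.prod ?_ hV
    have h1 : IsOpen {t : ℝ | a < (t : EReal)} :=
      isOpen_lt continuous_const continuous_coe_real_ereal
    have h2 : IsOpen {t : ℝ | t < b} := isOpen_lt continuous_id continuous_const
    exact h1.inter h2
  have hSV_TV : (S ×ˢ V : Set (ℝ × E)) ⊆ T ×ˢ V' := prod_mono hST hVV'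
  have hprodcl : ∀ z ∈ (T ×ˢ V' : Set (ℝ × E)), z ∈ closure (S ×ˢ V) := by
    intro z hz
    rw [closure_prod_eq]
    exact ⟨hTclS hz.1, hV'cl hz.2⟩
  -- eventual membership along directional lines
  have hev : ∀ x ∈ (S ×ˢ V : Set (ℝ × E)), ∀ u : ℝ × E,
      ∀ᶠ t : ℝ in 𝓝[≠] (0:ℝ), x + t • u ∈ S ×ˢ V := by
    intro x hx u
    apply eventually_nhdsWithin_of_eventually_nhds
    have hc : Tendsto (fun t : ℝ => x + t • u) (𝓝 0) (𝓝 x) := by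
      have h : Continuous fun t : ℝ => x + t • u := by continuity
      simpa using h.tendsto 0
    exact hc.eventually_mem (hSVopen.mem_nhds hx)
  -- Lemma A: Df m depends only on the first m directions
  have hA : ∀ m : ℕ, (m : ℕ∞) ≤ k → ∀ x ∈ (S ×ˢ V : Set (ℝ × E)), ∀ v v' : ℕ → ℝ × E,
      (∀ i, i < m → v i = v' i) → Df m x v = Df m x v' := by
    intro m
    induction m with
    | zero => intro _ x _ v v' _; rw [hf.zeroth, hf.zeroth]
    | succ n ih =>
      intro hk x hx v v' hvv'
      have hkn : (n : ℕ∞) < k :=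
        lt_of_lt_of_le (by exact_mod_cast Nat.lt_succ_self n) hk
      have d1 := hf.deriv n hkn x hx v
      have d2 := hf.deriv n hkn x hx v'
      unfold HasDirDeriv at d1 d2
      have hvn : v n = v' n := hvv' n (Nat.lt_succ_self n)
      have heqf : (fun t : ℝ => t⁻¹ • (Df n (x + t • v n) v - Df n x v))
          =ᶠ[𝓝[≠] (0:ℝ)] fun t => t⁻¹ • (Df n (x + t • v' n) v' - Df n x v') := by
        filter_upwards [hev x hx (v n)] with t ht
        rw [← hvn, ih hkn.le _ ht v v' (fun i hi => hvv' i (hi.trans (Nat.lt_succ_self n))),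
          ih hkn.le x hx v v' (fun i hi => hvv' i (hi.trans (Nat.lt_succ_self n)))]
      exact tendsto_nhds_unique (d1.congr' heqf) d2
  -- Lemma B: homogeneity in each slot
  have hB : ∀ m : ℕ, (m : ℕ∞) ≤ k → ∀ i, i < m → ∀ x ∈ (S ×ˢ V : Set (ℝ × E)),
      ∀ v : ℕ → ℝ × E, ∀ s : ℝ,
      Df m x (Function.update v i (s • v i)) = s • Df m x v := by
    intro m
    induction m with
    | zero => intro _ i hi; exact absurd hi (Nat.not_lt_zero i)
    | succ n ih =>
      intro hk i hi x hx v s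
      have hkn : (n : ℕ∞) < k :=
        lt_of_lt_of_le (by exact_mod_cast Nat.lt_succ_self n) hk
      rcases Nat.lt_succ_iff_lt_or_eq.1 hi with hin | rfl
      · set v'' := Function.update v i (s • v i) with hv''def
        have hv''n : v'' n = v n := Function.update_of_ne hin.ne' _ _
        have d2 := hf.deriv n hkn x hx v''
        unfold HasDirDeriv at d2
        have d1 := (hf.deriv n hkn x hx v).const_smul s
        unfold HasDirDeriv at d1
        have heqf : (fun t : ℝ => t⁻¹ • (Df n (x + t • v'' n) v'' - Df n x v''))
            =ᶠ[𝓝[≠] (0:ℝ)]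
            fun t => s • (t⁻¹ • (Df n (x + t • v n) v - Df n x v)) := by
          filter_upwards [hev x hx (v n)] with t ht
          rw [hv''n, hv''def, ih hkn.le i hin _ ht v s, ih hkn.le i hin x hx v s,
            ← smul_sub, smul_comm]
        exact tendsto_nhds_unique (d2.congr' heqf) d1
      · set v'' := Function.update v i (s • v i) with hv''def
        have hv''i : v'' i = s • v i := Function.update_self _ _ _
        have hDfeq : ∀ y ∈ (S ×ˢ V : Set (ℝ × E)), Df i y v'' = Df i y v :=
          fun y hy => hA i hkn.le y hy v'' v
            (fun j hj => Function.update_of_ne hj.ne _ _)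
        have d2 := hf.deriv i hkn x hx v''
        unfold HasDirDeriv at d2
        rw [hv''i] at d2
        by_cases hs : s = 0
        · subst hs
          have heqf : (fun t : ℝ => t⁻¹ • (Df i (x + t • ((0:ℝ) • v i)) v'' - Df i x v''))
              =ᶠ[𝓝[≠] (0:ℝ)] fun _ => (0 : F) := by
            filter_upwards with t
            simp
          rw [zero_smul]
          exact tendsto_nhds_unique (d2.congr' heqf) tendsto_const_nhds
        · have hmul : Tendsto (fun t : ℝ => s * t) (𝓝[≠] (0:ℝ)) (𝓝[≠] (0:ℝ)) := by
            refine tendsto_nhdsWithin_of_tendsto_nhds_of_eventually_within _ ?_ ?_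
            · have h : Tendsto (fun t : ℝ => s * t) (𝓝 0) (𝓝 0) := by
                simpa using (continuous_mul_left s).tendsto (0:ℝ)
              exact h.mono_left nhdsWithin_le_nhds
            · filter_upwards [self_mem_nhdsWithin] with t ht
              exact mul_ne_zero hs ht
          have base := hf.deriv i hkn x hx v
          unfold HasDirDeriv at base
          have comp := (base.comp hmul).const_smul s
          have heqf : (fun t : ℝ => t⁻¹ • (Df i (x + t • (s • v i)) v'' - Df i x v''))
              =ᶠ[𝓝[≠] (0:ℝ)]
              fun t => s • ((s * t)⁻¹ • (Df i (x + (s * t) • v i) v - Df i x v)) := by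
            filter_upwards [hev x hx (s • v i), self_mem_nhdsWithin] with t ht ht0
            have ht0' : t ≠ 0 := ht0
            have hx' : x + t • (s • v i) = x + (s * t) • v i := by
              rw [smul_smul, mul_comm]
            rw [hDfeq _ ht, hDfeq x hx, hx', smul_smul]
            congr 1
            field_simp
          exact tendsto_nhds_unique (d2.congr' heqf) comp
  -- Lemma B': product homogeneity for Df ℓ
  have hstep : ∀ j, j ≤ ℓ → ∀ x ∈ (S ×ˢ V : Set (ℝ × E)), ∀ v : ℕ → ℝ × E, ∀ cf : ℕ → ℝ,
      Df ℓ x (fun i => if i < j then cf i • v i else v i)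
        = (∏ i ∈ Finset.range j, cf i) • Df ℓ x v := by
    intro j
    induction j with
    | zero => intro _ x _ v cf; simp
    | succ n ih =>
      intro hn x hx v cf
      have h1 : (fun i => if i < n + 1 then cf i • v i else v i)
          = Function.update (fun i => if i < n then cf i • v i else v i) n
            (cf n • (fun i => if i < n then cf i • v i else v i) n) := by
        funext i
        rcases eq_or_ne i n with rfl | hne
        · simp
        · rw [Function.update_of_ne hne]
          by_cases h2 : i < n
          · simp [h2, Nat.lt_succ_of_lt h2]
          · have h3 : ¬ i < n + 1 := by omega
            simp [h2, h3]
      rw [h1, hB ℓ hℓk n (by omega) x hx _ (cf n), ih (by omega) x hx v cf,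
        Finset.prod_range_succ, smul_smul, mul_comm]
  have hB' : ∀ x ∈ (S ×ˢ V : Set (ℝ × E)), ∀ v : ℕ → ℝ × E, ∀ cf : ℕ → ℝ,
      Df ℓ x (fun i => if i < ℓ then cf i • v i else 0)
        = (∏ i ∈ Finset.range ℓ, cf i) • Df ℓ x v := by
    intro x hx v cf
    rw [← hstep ℓ le_rfl x hx v cf]
    exact hA ℓ hℓk x hx _ _ (fun i hi => by simp [hi])
  -- continuity in z for fixed w
  have hCw : ∀ w : ℕ → ℝ × E, ContinuousOn (fun z => Φ ℓ z w) (T ×ˢ V') := by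
    intro w
    have h1 : ContinuousOn (fun z : ℝ × E => ((z, w) : (ℝ × E) × (ℕ → ℝ × E)))
        (T ×ˢ V') := (continuous_id.prodMk continuous_const).continuousOn
    exact (hΦcont ℓ hℓk).comp h1 (fun z hz => ⟨hz, mem_univ _⟩)
  -- transfer of homogeneity to Φ
  have hP : ∀ z ∈ (T ×ˢ V' : Set (ℝ × E)), ∀ w : ℕ → ℝ × E, ∀ cf : ℕ → ℝ,
      Φ ℓ z (fun i => if i < ℓ then cf i • w i else 0)
        = (∏ i ∈ Finset.range ℓ, cf i) • Φ ℓ z w := by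
    intro z hz w cf
    refine eqOn_of_dense' hSV_TV (hCw _) ((hCw w).const_smul _) ?_ hz (hprodcl z hz)
    intro z' hz'
    rw [hΦ ℓ hℓk z' hz']; simp only [Pi.smul_apply]; rw [hΦ ℓ hℓk z' hz', hB' z' hz' w cf]
  have hΦ0 : ∀ z ∈ (T ×ˢ V' : Set (ℝ × E)), Φ ℓ z (fun _ => (0 : ℝ × E)) = 0 := by
    intro z hz
    have hℓ0 : ℓ ≠ 0 := by omega
    have h := hP z hz (fun _ => 0) (fun _ => 0)
    simpa [Finset.prod_const, Finset.card_range, zero_pow hℓ0] using h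
  -- local bound around each point of the compact set
  have hkey : ∀ z₀ ∈ (Icc c d ×ˢ K : Set (ℝ × E)), ∃ W : Set (ℝ × E), IsOpen W ∧ z₀ ∈ W ∧
      ∃ q : Seminorm ℝ E, Continuous q ∧ ∃ ε : ℝ, 0 < ε ∧
      ∀ z ∈ W ∩ T ×ˢ V', ∀ w : ℕ → ℝ × E,
        (∀ i, i < ℓ → |(w i).1| < ε ∧ q (w i).2 < ε) → (∀ i, ℓ ≤ i → w i = 0) →
        p (Φ ℓ z w) < 1 := by
    intro z₀ hz₀
    have hz₀' : z₀ ∈ (T ×ˢ V' : Set (ℝ × E)) := ⟨hIccT hz₀.1, hKV' hz₀.2⟩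
    have hG : ContinuousOn (fun q : (ℝ × E) × (ℕ → ℝ × E) => p (Φ ℓ q.1 q.2))
        ((T ×ˢ V') ×ˢ (univ : Set (ℕ → ℝ × E))) := hp.comp_continuousOn (hΦcont ℓ hℓk)
    have hmem : ((z₀, fun _ => (0:ℝ×E)) : (ℝ × E) × (ℕ → ℝ × E))
        ∈ (T ×ˢ V') ×ˢ (univ : Set (ℕ → ℝ × E)) := ⟨hz₀', mem_univ _⟩
    have hcwa := hG _ hmem
    have hlt : Iio (1:ℝ) ∈ 𝓝 (p (Φ ℓ z₀ fun _ => 0)) := by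
      rw [hΦ0 z₀ hz₀', map_zero]
      exact Iio_mem_nhds one_pos
    have hpre := hcwa hlt
    rw [Filter.mem_map, mem_nhdsWithin] at hpre
    obtain ⟨O, hOopen, hO0, hOsub⟩ := hpre
    obtain ⟨W, Y, hWopen, hz₀W, hYopen, h0Y, hWY⟩ :=
      mem_nhds_prod_iff'.1 (hOopen.mem_nhds hO0)
    have hY : Y ∈ 𝓝 (fun _ => (0:ℝ×E) : ℕ → ℝ × E) := hYopen.mem_nhds h0Y
    rw [nhds_pi, Filter.mem_pi] at hY
    obtain ⟨I, hIfin, tt, htt, httY⟩ := hY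
    have hch : ∀ i : ℕ, ∃ (q : Seminorm ℝ E) (ε : ℝ), Continuous q ∧ 0 < ε ∧
        ∀ y : ℝ × E, |y.1| < ε → q y.2 < ε → y ∈ tt i := by
      intro i
      have hti : tt i ∈ 𝓝 ((0,0) : ℝ × E) := htt i
      rw [mem_nhds_prod_iff] at hti
      obtain ⟨u, hu, v, hv, huv⟩ := hti
      obtain ⟨ε₁, hε₁, hball⟩ := Metric.mem_nhds_iff.1 hu
      obtain ⟨q, hqc, ε₂, hε₂, hqball⟩ := exists_seminorm_nhds' hv
      refine ⟨q, min ε₁ ε₂, hqc, lt_min hε₁ hε₂, ?_⟩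
      intro y hy1 hy2
      refine huv ⟨hball ?_, hqball ?_⟩
      · rw [Metric.mem_ball, Real.dist_eq, sub_zero]
        exact hy1.trans_le (min_le_left _ _)
      · exact hy2.trans_le (min_le_right _ _)
    choose qf εf hqc hεpos hsub using hch
    set J : Finset ℕ := hIfin.toFinset with hJdef
    set ε : ℝ := if h : J.Nonempty then J.inf' h εf else 1 with hεdef
    have hεpos' : 0 < ε := by
      rw [hεdef]
      split_ifs with h
      · exact (Finset.lt_inf'_iff h).2 fun i _ => hεpos i
      · exact one_pos
    have hεle : ∀ i ∈ J, ε ≤ εf i := by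
      intro i hi
      rw [hεdef]
      rw [dif_pos ⟨i, hi⟩]
      exact Finset.inf'_le _ hi
    set q : Seminorm ℝ E := ∑ i ∈ J, qf i with hqdef
    have hqapp : ∀ x : E, q x = ∑ i ∈ J, qf i x := by
      intro x
      have h1 : (⇑(∑ i ∈ J, qf i) : E → ℝ) = ∑ i ∈ J, (⇑(qf i) : E → ℝ) :=
        map_sum (FunLike.coeAddMonoidHom (Seminorm ℝ E) E ℝ) (fun i => qf i) J
      rw [hqdef]
      show (⇑(∑ i ∈ J, qf i) : E → ℝ) x = _
      rw [h1, Finset.sum_apply]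
    have hqcont : Continuous q := by
      have heq : (⇑q) = fun x : E => ∑ i ∈ J, qf i x := funext hqapp
      rw [heq]
      exact continuous_finset_sum _ fun i _ => hqc i
    refine ⟨W, hWopen, hz₀W, q, hqcont, ε, hεpos', ?_⟩
    intro z hz w hw hw0
    have hwY : w ∈ Y := by
      apply httY
      intro i hi
      by_cases hiℓ : i < ℓ
      · have hiJ : i ∈ J := hIfin.mem_toFinset.2 hi
        refine hsub i (w i) ((hw i hiℓ).1.trans_le (hεle i hiJ)) ?_
        have h1 : qf i (w i).2 ≤ q (w i).2 := by
          rw [hqapp]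
          exact Finset.single_le_sum (fun j _ => apply_nonneg (qf j) _) hiJ
        exact (h1.trans_lt (hw i hiℓ).2).trans_le (hεle i hiJ)
      · have : w i = 0 := hw0 i (by omega)
        rw [this]
        exact mem_of_mem_nhds (htt i)
    have hmemO : ((z, w) : (ℝ × E) × (ℕ → ℝ × E)) ∈ O := hWY ⟨hz.1, hwY⟩
    exact hOsub ⟨hmemO, hz.2, mem_univ _⟩
  -- main assembly
  rcases K.eq_empty_or_nonempty with rfl | hKne
  · refine ⟨1, le_rfl, 0, ?_, ∅, isOpen_empty, Subset.rfl, ?_⟩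
    · simp only [Seminorm.coe_zero]
      exact continuous_zero
    · intro t ht x hx
      exact absurd hx.1 (notMem_empty x)
  · have hZ : IsCompact (Icc c d ×ˢ K : Set (ℝ × E)) := isCompact_Icc.prod hK
    choose! W hWopen hWmem q' hq'cont ε' hε'pos hbound using hkey
    obtain ⟨J, hJZ, hcover⟩ := hZ.elim_nhds_subcover W
      (fun z hz => (hWopen z hz).mem_nhds (hWmem z hz))
    have hZne : (Icc c d ×ˢ K : Set (ℝ × E)).Nonempty := by
      obtain ⟨x₀, hx₀⟩ := hKne
      exact ⟨(c, x₀), ⟨⟨le_rfl, hcd.le⟩, hx₀⟩⟩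
    have hJne : J.Nonempty := by
      obtain ⟨z, hz⟩ := hZne
      obtain ⟨j, hj⟩ := mem_iUnion₂.1 (hcover hz)
      exact ⟨j, hj.1⟩
    set ε : ℝ := J.inf' hJne ε' with hεdef
    have hεpos : 0 < ε := (Finset.lt_inf'_iff hJne).2 fun j hj => hε'pos j (hJZ j hj)
    set δ : ℝ := ε / 2 with hδdef
    have hδpos : 0 < δ := by positivity
    have hδε : δ < ε := by rw [hδdef]; linarith
    set qE : Seminorm ℝ E := ∑ j ∈ J, q' j with hqEdef
    have hqEapp : ∀ x : E, qE x = ∑ j ∈ J, q' j x := by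
      intro x
      have h1 : (⇑(∑ j ∈ J, q' j) : E → ℝ) = ∑ j ∈ J, (⇑(q' j) : E → ℝ) :=
        map_sum (FunLike.coeAddMonoidHom (Seminorm ℝ E) E ℝ) (fun j => q' j) J
      rw [hqEdef]
      show (⇑(∑ j ∈ J, q' j) : E → ℝ) x = _
      rw [h1, Finset.sum_apply]
    have hqEcont : Continuous qE := by
      have heq : (⇑qE) = fun x : E => ∑ j ∈ J, q' j x := funext hqEapp
      rw [heq]
      exact continuous_finset_sum _ fun j hj => hq'cont j (hJZ j hj)
    have hOopen : IsOpen (⋃ z ∈ J, W z) := isOpen_biUnion fun z hz => hWopen z (hJZ z hz)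
    obtain ⟨u, U, huopen, hUopen, hIccu, hKU, huU⟩ :=
      generalized_tube_lemma isCompact_Icc hK hOopen hcover
    refine ⟨max 1 (δ⁻¹ ^ ℓ), le_max_left _ _, qE, hqEcont, U, hUopen, hKU, ?_⟩
    intro t ht x hx w
    have hzO : ((t, x) : ℝ × E) ∈ ⋃ z ∈ J, W z := huU ⟨hIccu ht, hx.1⟩
    obtain ⟨j, hjJ, hzWj⟩ := mem_iUnion₂.1 hzO
    have hzTV : ((t, x) : ℝ × E) ∈ T ×ˢ V' := ⟨hIccT ht, hx.2⟩
    set m : ℕ → ℝ := fun i => max |(w i).1| (qE (w i).2) with hmdef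
    have hm0 : ∀ i, 0 ≤ m i := fun i => le_max_of_le_left (abs_nonneg _)
    have hest : ∀ η : ℝ, 0 < η →
        p (Φ ℓ (t, x) w) ≤ δ⁻¹ ^ ℓ * ∏ i ∈ Finset.range ℓ, (m i + η) := by
      intro η hη
      set cf : ℕ → ℝ := fun i => δ / (m i + η) with hcfdef
      have hmη : ∀ i, 0 < m i + η := fun i => add_pos_of_nonneg_of_pos (hm0 i) hη
      have hcfpos : ∀ i, 0 < cf i := fun i => div_pos hδpos (hmη i)
      have hcfm : ∀ i, cf i * m i < δ := by
        intro i
        rw [hcfdef]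
        have h1 : δ / (m i + η) * m i = δ * (m i / (m i + η)) := by ring
        rw [h1]
        have h2 : m i / (m i + η) < 1 := (div_lt_one (hmη i)).2 (by linarith [hm0 i])
        nlinarith
      have hεlej : ε ≤ ε' j := Finset.inf'_le _ hjJ
      have hcond1 : ∀ i, i < ℓ →
          |((fun i => if i < ℓ then cf i • w i else 0) i).1| < ε' j ∧
          q' j (((fun i => if i < ℓ then cf i • w i else 0) i).2) < ε' j := by
        intro i hiℓ
        simp only [if_pos hiℓ]
        constructor
        · have h1 : |(cf i • w i).1| = cf i * |(w i).1| := by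
            rw [Prod.smul_fst, smul_eq_mul, abs_mul, abs_of_pos (hcfpos i)]
          rw [h1]
          have h2 : cf i * |(w i).1| ≤ cf i * m i :=
            mul_le_mul_of_nonneg_left (le_max_left _ _) (hcfpos i).le
          calc cf i * |(w i).1| ≤ cf i * m i := h2
            _ < δ := hcfm i
            _ < ε := hδε
            _ ≤ ε' j := hεlej
        · have h1 : q' j ((cf i • w i).2) = cf i * q' j ((w i).2) := by
            rw [Prod.smul_snd, map_smul_eq_mul, Real.norm_eq_abs, abs_of_pos (hcfpos i)]
          rw [h1]
          have h2 : q' j ((w i).2) ≤ m i := by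
            refine le_trans ?_ (le_max_right _ _)
            rw [hqEapp]
            exact Finset.single_le_sum (fun l _ => apply_nonneg (q' l) _) hjJ
          calc cf i * q' j ((w i).2) ≤ cf i * m i :=
                mul_le_mul_of_nonneg_left h2 (hcfpos i).le
            _ < δ := hcfm i
            _ < ε := hδε
            _ ≤ ε' j := hεlej
      have hcond2 : ∀ i, ℓ ≤ i → (fun i => if i < ℓ then cf i • w i else 0) i = 0 := by
        intro i hiℓ
        simp only [if_neg (by omega : ¬ i < ℓ)]
      have hscaled := hbound j (hJZ j hjJ) (t, x) ⟨hzWj, hzTV⟩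
        (fun i => if i < ℓ then cf i • w i else 0) hcond1 hcond2
      have hPz := hP (t, x) hzTV w cf
      rw [hPz] at hscaled
      have hprodpos : 0 < ∏ i ∈ Finset.range ℓ, cf i :=
        Finset.prod_pos fun i _ => hcfpos i
      rw [map_smul_eq_mul, Real.norm_eq_abs, abs_of_pos hprodpos] at hscaled
      have h3 : p (Φ ℓ (t, x) w) < 1 / ∏ i ∈ Finset.range ℓ, cf i :=
        (lt_div_iff₀' hprodpos).2 hscaled
      have h4 : 1 / ∏ i ∈ Finset.range ℓ, cf i
          = δ⁻¹ ^ ℓ * ∏ i ∈ Finset.range ℓ, (m i + η) := by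
        rw [one_div, ← Finset.prod_inv_distrib]
        have h5 : ∀ i ∈ Finset.range ℓ, (cf i)⁻¹ = δ⁻¹ * (m i + η) := by
          intro i _
          rw [hcfdef]
          field_simp
        rw [Finset.prod_congr rfl h5, Finset.prod_mul_distrib, Finset.prod_const,
          Finset.card_range]
      rw [h4] at h3
      exact h3.le
    have hlim : Tendsto (fun η : ℝ => δ⁻¹ ^ ℓ * ∏ i ∈ Finset.range ℓ, (m i + η))
        (𝓝[>] (0:ℝ)) (𝓝 (δ⁻¹ ^ ℓ * ∏ i ∈ Finset.range ℓ, (m i + 0))) := by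
      have h : Continuous fun η : ℝ => δ⁻¹ ^ ℓ * ∏ i ∈ Finset.range ℓ, (m i + η) :=
        continuous_const.mul (continuous_finset_prod _ fun i _ =>
          continuous_const.add continuous_id)
      exact (h.tendsto 0).mono_left nhdsWithin_le_nhds
    have hfinal : p (Φ ℓ (t, x) w) ≤ δ⁻¹ ^ ℓ * ∏ i ∈ Finset.range ℓ, m i := by
      have h := ge_of_tendsto hlim (by
        filter_upwards [self_mem_nhdsWithin] with η hη
        exact hest η hη)
      simpa using h
    refine hfinal.trans ?_
    exact mul_le_mul_of_nonneg_right (le_max_right _ _)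
      (Finset.prod_nonneg fun i _ => hm0 i)
end
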